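/- arXiv:1603.00613 — 9 statements merged into one kernel-verified Lean document; each statement's English description precedes it below -/
import Mathlib

section
/- If X is a real random variable with a ≤ X ≤ b almost surely, then 1 ≤ E[e^{X - E[X]}] ≤ e^{(b-a)²/8}. -/
open MeasureTheory

open Real Set in
lemma hoeffding_key (p : ℝ) (hp0 : 0 ≤ p) (hp1 : p ≤ 1) (h : ℝ) (hh : 0 ≤ h) :
    1 - p + p * Real.exp h ≤ Real.exp (h ^ 2 / 8 + p * h) := by
  have hpos : ∀ x : ℝ, 0 < 1 - p + p * Real.exp x := by
    intro x
    rcases lt_or_ge p 1 with h1 | h1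
    · have := mul_nonneg hp0 (Real.exp_pos x).le; linarith
    · have hp : p = 1 := le_antisymm hp1 h1
      simpa [hp] using Real.exp_pos x
  set f : ℝ → ℝ := fun x => x ^ 2 / 8 + p * x - Real.log (1 - p + p * Real.exp x) with hf
  set f' : ℝ → ℝ := fun x => x / 4 + p - p * Real.exp x / (1 - p + p * Real.exp x) with hf'
  have hD : ∀ x : ℝ, HasDerivAt (fun y => 1 - p + p * Real.exp y) (p * Real.exp x) x := by
    intro x
    simpa using ((Real.hasDerivAt_exp x).const_mul p).const_add (1 - p)
  have hderiv : ∀ x : ℝ, HasDerivAt f (f' x) x := by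
    intro x
    have h1 : HasDerivAt (fun y : ℝ => y ^ 2 / 8 + p * y) (x / 4 + p) x := by
      have := ((hasDerivAt_pow 2 x).div_const 8).add ((hasDerivAt_id x).const_mul p)
      refine this.congr_deriv ?_; push_cast; ring
    have h2 : HasDerivAt (fun y => Real.log (1 - p + p * Real.exp y))
        (p * Real.exp x / (1 - p + p * Real.exp x)) x := (hD x).log (hpos x).ne'
    exact h1.sub h2
  have hderiv2 : ∀ x : ℝ, HasDerivAt f'
      (1 / 4 - p * Real.exp x * (1 - p) / (1 - p + p * Real.exp x) ^ 2) x := by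
    intro x
    have h1 : HasDerivAt (fun y : ℝ => y / 4 + p) (1 / 4) x := by
      simpa using ((hasDerivAt_id x).div_const 4).add_const p
    have h2 : HasDerivAt (fun y => p * Real.exp y / (1 - p + p * Real.exp y))
        ((p * Real.exp x * (1 - p + p * Real.exp x) - p * Real.exp x * (p * Real.exp x)) /
          (1 - p + p * Real.exp x) ^ 2) x :=
      ((Real.hasDerivAt_exp x).const_mul p).div (hD x) (hpos x).ne'
    have := h1.sub h2
    refine this.congr_deriv ?_
    have hne := (hpos x).ne'
    ring
  have hf'nonneg : ∀ x ∈ Ici (0:ℝ), 0 ≤ f' x := by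
    have hmono : MonotoneOn f' (Ici (0:ℝ)) := by
      apply monotoneOn_of_deriv_nonneg (convex_Ici 0)
        ((continuous_iff_continuousAt.2 fun x => (hderiv2 x).continuousAt).continuousOn)
      · intro x hx
        exact (hderiv2 x).differentiableAt.differentiableWithinAt
      · intro x hx
        rw [(hderiv2 x).deriv]
        have hne := hpos x
        rw [sub_nonneg, div_le_div_iff₀ (by positivity) (by norm_num : (0:ℝ) < 4)]
        nlinarith [sq_nonneg ((1 - p) - p * Real.exp x), Real.exp_pos x]
    intro x hx
    have h0 : f' 0 = 0 := by
      simp only [hf']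
      rw [Real.exp_zero]
      have : (1 : ℝ) - p + p * 1 = 1 := by ring
      rw [this]
      ring
    calc (0:ℝ) = f' 0 := h0.symm
      _ ≤ f' x := hmono (self_mem_Ici) hx hx
  have hfnonneg : 0 ≤ f h := by
    have hmono : MonotoneOn f (Ici (0:ℝ)) := by
      apply monotoneOn_of_deriv_nonneg (convex_Ici 0)
        ((continuous_iff_continuousAt.2 fun x => (hderiv x).continuousAt).continuousOn)
      · intro x hx
        exact (hderiv x).differentiableAt.differentiableWithinAt
      · intro x hx
        rw [(hderiv x).deriv]
        exact hf'nonneg x (interior_subset hx)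
    have h0 : f 0 = 0 := by
      simp [hf]
    calc (0:ℝ) = f 0 := h0.symm
      _ ≤ f h := hmono (self_mem_Ici) hh hh
  have hlog : Real.log (1 - p + p * Real.exp h) ≤ h ^ 2 / 8 + p * h := by
    simp only [hf] at hfnonneg; linarith
  calc 1 - p + p * Real.exp h = Real.exp (Real.log (1 - p + p * Real.exp h)) :=
        (Real.exp_log (hpos h)).symm
    _ ≤ Real.exp (h ^ 2 / 8 + p * h) := Real.exp_le_exp.2 hlog

theorem hoeffding_real {Ω : Type*} [MeasurableSpace Ω] (μ : Measure Ω)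
    [IsProbabilityMeasure μ] (X : Ω → ℝ) (hX : Integrable X μ) (a b : ℝ)
    (hab : ∀ᵐ ω ∂μ, a ≤ X ω ∧ X ω ≤ b) :
    1 ≤ ∫ ω, Real.exp (X ω - ∫ ω', X ω' ∂μ) ∂μ ∧
      ∫ ω, Real.exp (X ω - ∫ ω', X ω' ∂μ) ∂μ ≤ Real.exp ((b - a) ^ 2 / 8) := by
  set m : ℝ := ∫ ω', X ω' ∂μ with hm
  -- integral bounds
  have ham : a ≤ m := by
    calc a = ∫ _ω, a ∂μ := by simp
      _ ≤ m := integral_mono_ae (integrable_const a) hX (hab.mono fun ω hω => hω.1)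
  have hmb : m ≤ b := by
    have h := integral_mono_ae hX (integrable_const b) (hab.mono fun ω hω => hω.2)
    simpa using h
  -- integrability of exp (X - m)
  have hmeas : AEStronglyMeasurable (fun ω => Real.exp (X ω - m)) μ :=
    Real.continuous_exp.comp_aestronglyMeasurable (hX.1.sub aestronglyMeasurable_const)
  have hint : Integrable (fun ω => Real.exp (X ω - m)) μ := by
    refine Integrable.mono' (integrable_const (Real.exp (b - m))) hmeas ?_
    filter_upwards [hab] with ω hω
    rw [Real.norm_eq_abs, abs_of_pos (Real.exp_pos _)]
    exact Real.exp_le_exp.2 (by linarith [hω.2])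
  constructor
  · -- lower bound via 1 + y ≤ exp y
    have hi : Integrable (fun ω => X ω - m) μ := hX.sub (integrable_const m)
    have hint2 : Integrable (fun ω => 1 + (X ω - m)) μ := (integrable_const 1).add hi
    have hle : ∫ ω, (1 + (X ω - m)) ∂μ ≤ ∫ ω, Real.exp (X ω - m) ∂μ :=
      integral_mono_ae hint2 hint (ae_of_all _ fun ω => by
        dsimp only; linarith [Real.add_one_le_exp (X ω - m)])
    have hval : ∫ ω, (1 + (X ω - m)) ∂μ = 1 := by
      rw [integral_add (integrable_const 1) hi, integral_sub hX (integrable_const m)]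
      simp [hm]
    linarith
  · -- upper bound
    rcases eq_or_lt_of_le (le_trans ham hmb) with hab' | hab'
    · -- a = b
      have hma : m = a := le_antisymm (hab' ▸ hmb) ham
      have : ∫ ω, Real.exp (X ω - m) ∂μ = 1 := by
        rw [show (1:ℝ) = ∫ _ω, (1:ℝ) ∂μ by simp]
        apply integral_congr_ae
        filter_upwards [hab] with ω hω
        have : X ω = a := le_antisymm (hab' ▸ hω.2) hω.1
        simp [this, hma]
      rw [this]
      exact Real.one_le_exp (by positivity)
    · -- a < b
      have hba : (0:ℝ) < b - a := by linarith
      set p : ℝ := (m - a) / (b - a) with hp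
      have hp0 : 0 ≤ p := div_nonneg (by linarith) hba.le
      have hp1 : p ≤ 1 := (div_le_one hba).2 (by linarith)
      -- pointwise convexity bound
      have hconv : ∀ᵐ ω ∂μ, Real.exp (X ω - m) ≤
          ((b - X ω) * Real.exp (a - m) + (X ω - a) * Real.exp (b - m)) / (b - a) := by
        filter_upwards [hab] with ω hω
        have ht : 0 ≤ (b - X ω) / (b - a) := div_nonneg (by linarith [hω.2]) hba.le
        have hs : 0 ≤ (X ω - a) / (b - a) := div_nonneg (by linarith [hω.1]) hba.le
        have hts : (b - X ω) / (b - a) + (X ω - a) / (b - a) = 1 := by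
          field_simp
          ring
        have hcv := convexOn_exp.2 (Set.mem_univ (a - m)) (Set.mem_univ (b - m)) ht hs hts
        have hcomb : ((b - X ω) / (b - a)) • (a - m) + ((X ω - a) / (b - a)) • (b - m)
            = X ω - m := by
          simp only [smul_eq_mul]
          field_simp
          ring
        rw [hcomb] at hcv
        calc Real.exp (X ω - m)
            ≤ ((b - X ω) / (b - a)) * Real.exp (a - m)
              + ((X ω - a) / (b - a)) * Real.exp (b - m) := hcv
          _ = ((b - X ω) * Real.exp (a - m) + (X ω - a) * Real.exp (b - m)) / (b - a) := by
            ring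
      have hi1 : Integrable (fun ω => (b - X ω) * Real.exp (a - m)) μ :=
        ((integrable_const b).sub hX).mul_const _
      have hi2 : Integrable (fun ω => (X ω - a) * Real.exp (b - m)) μ :=
        (hX.sub (integrable_const a)).mul_const _
      have hint3 : Integrable (fun ω =>
          ((b - X ω) * Real.exp (a - m) + (X ω - a) * Real.exp (b - m)) / (b - a)) μ :=
        (hi1.add hi2).div_const _
      have hle := integral_mono_ae hint hint3 hconv
      have hval : ∫ ω, ((b - X ω) * Real.exp (a - m) + (X ω - a) * Real.exp (b - m)) / (b - a) ∂μ
          = ((b - m) * Real.exp (a - m) + (m - a) * Real.exp (b - m)) / (b - a) := by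
        rw [integral_div, integral_add hi1 hi2, integral_mul_const, integral_mul_const,
          integral_sub (integrable_const b) hX, integral_sub hX (integrable_const a)]
        simp [hm]
      rw [hval] at hle
      have hkey := hoeffding_key p hp0 hp1 (b - a) hba.le
      have hexp : Real.exp ((b - a) ^ 2 / 8 + p * (b - a)) * Real.exp (a - m)
          = Real.exp ((b - a) ^ 2 / 8) := by
        rw [← Real.exp_add]
        congr 1
        have : p * (b - a) = m - a := by rw [hp]; field_simp
        rw [this]; ring
      have hlhs : (1 - p + p * Real.exp (b - a)) * Real.exp (a - m)
          = (1 - p) * Real.exp (a - m) + p * Real.exp (b - m) := by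
        rw [mul_comm p (Real.exp (b - a))]
        rw [show (1 - p + Real.exp (b - a) * p) * Real.exp (a - m)
          = (1 - p) * Real.exp (a - m) + p * (Real.exp (b - a) * Real.exp (a - m)) by ring,
          ← Real.exp_add]
        ring_nf
      have hfin : ((b - m) * Real.exp (a - m) + (m - a) * Real.exp (b - m)) / (b - a)
          = (1 - p) * Real.exp (a - m) + p * Real.exp (b - m) := by
        have h1p : 1 - p = (b - m) / (b - a) := by rw [hp]; field_simp; ring
        rw [h1p, hp]; ring
      have hmul := mul_le_mul_of_nonneg_right hkey (Real.exp_pos (a - m)).le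
      rw [hlhs, hexp] at hmul
      calc ∫ ω, Real.exp (X ω - m) ∂μ
          ≤ ((b - m) * Real.exp (a - m) + (m - a) * Real.exp (b - m)) / (b - a) := hle
        _ = (1 - p) * Real.exp (a - m) + p * Real.exp (b - m) := hfin
        _ ≤ Real.exp ((b - a) ^ 2 / 8) := hmul
end

section
/- If Z is a complex random variable with |Z - E[Z]| ≤ α almost surely, then |E[e^{Z - E[Z]}] - 1| ≤ e^{α²/2} - 1. -/
open MeasureTheory

/-- Chord bound for exp: convexity on `[-c, c]`. -/
lemma exp_le_chord {c x : ℝ} (hc : 0 < c) (hx : |x| ≤ c) :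
    Real.exp x ≤ Real.cosh c + (Real.sinh c / c) * x := by
  have hxc : -c ≤ x ∧ x ≤ c := abs_le.mp hx
  have ha : (0:ℝ) ≤ (c - x) / (2 * c) := by
    apply div_nonneg (by linarith [hxc.2]) (by linarith)
  have hb : (0:ℝ) ≤ (c + x) / (2 * c) := by
    apply div_nonneg (by linarith [hxc.1]) (by linarith)
  have hab : (c - x) / (2 * c) + (c + x) / (2 * c) = 1 := by field_simp; ring
  have h := convexOn_exp.2 (Set.mem_univ (-c)) (Set.mem_univ c) ha hb hab
  simp only [smul_eq_mul] at h
  have h1 : (c - x) / (2 * c) * (-c) + (c + x) / (2 * c) * c = x := by field_simp; ring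
  rw [h1] at h
  calc Real.exp x ≤ (c - x) / (2 * c) * Real.exp (-c) + (c + x) / (2 * c) * Real.exp c := h
    _ = Real.cosh c + (Real.sinh c / c) * x := by
        rw [Real.cosh_eq, Real.sinh_eq]; field_simp; ring

/-- Integrated chord bound: Hoeffding-type bound `E[exp X] ≤ cosh c`. -/
lemma integral_exp_le_cosh {Ω : Type*} [MeasurableSpace Ω] (μ : Measure Ω)
    [IsProbabilityMeasure μ] {X : Ω → ℝ} (hX : Measurable X) {c : ℝ} (hc : 0 < c)
    (hb : ∀ ω, |X ω| ≤ c) (h0 : ∫ ω, X ω ∂μ = 0) :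
    ∫ ω, Real.exp (X ω) ∂μ ≤ Real.cosh c := by
  have hXi : Integrable X μ := by
    refine Integrable.mono' (integrable_const c) hX.aestronglyMeasurable ?_
    exact Filter.Eventually.of_forall fun ω => by simpa using hb ω
  have hEi : Integrable (fun ω => Real.exp (X ω)) μ := by
    refine Integrable.mono' (integrable_const (Real.exp c)) ?_ ?_
    · exact (Real.measurable_exp.comp hX).aestronglyMeasurable
    · refine Filter.Eventually.of_forall fun ω => ?_
      rw [Real.norm_eq_abs, abs_of_pos (Real.exp_pos _)]
      exact Real.exp_le_exp.mpr (le_trans (le_abs_self _) (hb ω))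
  have hGi : Integrable (fun ω => Real.cosh c + (Real.sinh c / c) * X ω) μ :=
    (integrable_const _).add (hXi.const_mul _)
  calc ∫ ω, Real.exp (X ω) ∂μ ≤ ∫ ω, (Real.cosh c + (Real.sinh c / c) * X ω) ∂μ := by
        refine integral_mono hEi hGi fun ω => exp_le_chord hc (hb ω)
    _ = Real.cosh c := by
        rw [integral_add (integrable_const _) (hXi.const_mul _), integral_const,
          integral_const_mul, h0]
        simp

/-- Taylor formula with integral remainder for `cexp` at order 1. -/
lemma cexp_taylor (w : ℂ) :
    ∫ t in (0:ℝ)..1, ((1 - t : ℝ) • (w ^ 2 * Complex.exp ((t:ℝ) * w)))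
      = Complex.exp w - 1 - w := by
  have hderiv : ∀ t ∈ Set.uIcc (0:ℝ) 1,
      HasDerivAt (fun t : ℝ => ((1:ℂ) + w - (t:ℂ) * w) * Complex.exp ((t:ℂ) * w))
        ((1 - t : ℝ) • (w ^ 2 * Complex.exp ((t:ℝ) * w))) t := by
    intro t _
    have hc : HasDerivAt (fun t : ℝ => (t : ℂ)) 1 t := by
      exact (hasDerivAt_id t).ofReal_comp
    have h1 : HasDerivAt (fun t : ℝ => (t:ℂ) * w) w t := by
      simpa using hc.mul_const w
    have h2 : HasDerivAt (fun t : ℝ => (1:ℂ) + w - (t:ℂ) * w) (-w) t := by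
      have h2' := (hasDerivAt_const t ((1:ℂ) + w)).sub h1
      rw [zero_sub] at h2'
      exact h2'
    have h3 : HasDerivAt (fun t : ℝ => Complex.exp ((t:ℂ) * w))
        (Complex.exp ((t:ℂ) * w) * w) t := h1.cexp
    have h := h2.mul h3
    refine h.congr_deriv ?_
    rw [Complex.real_smul]
    push_cast
    ring
  have hcont : IntervalIntegrable
      (fun t : ℝ => ((1 - t : ℝ) • (w ^ 2 * Complex.exp ((t:ℝ) * w)))) volume 0 1 := by
    apply Continuous.intervalIntegrable
    fun_prop
  have := intervalIntegral.integral_eq_sub_of_hasDerivAt hderiv hcont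
  rw [this]
  push_cast
  ring_nf
  simp [Complex.exp_zero]
  ring

lemma ftc_exp_sq (α : ℝ) :
    ∫ t in (0:ℝ)..1, t * (α ^ 2 * Real.exp (t ^ 2 * α ^ 2 / 2))
      = Real.exp (α ^ 2 / 2) - 1 := by
  have hderiv : ∀ t ∈ Set.uIcc (0:ℝ) 1,
      HasDerivAt (fun t : ℝ => Real.exp (t ^ 2 * α ^ 2 / 2))
        (t * (α ^ 2 * Real.exp (t ^ 2 * α ^ 2 / 2))) t := by
    intro t _
    have h1 : HasDerivAt (fun t : ℝ => t ^ 2 * α ^ 2 / 2) (t * α ^ 2) t := by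
      have := ((hasDerivAt_pow 2 t).mul_const (α ^ 2)).div_const 2
      simpa using this.congr_deriv (by ring)
    have := h1.exp
    exact this.congr_deriv (by ring)
  have hcont : IntervalIntegrable
      (fun t : ℝ => t * (α ^ 2 * Real.exp (t ^ 2 * α ^ 2 / 2))) volume 0 1 := by
    apply Continuous.intervalIntegrable; fun_prop
  rw [intervalIntegral.integral_eq_sub_of_hasDerivAt hderiv hcont]
  norm_num

lemma integral_comparison (α : ℝ) :
    ∫ t in (0:ℝ)..1, (1 - t) * (α ^ 2 * Real.exp (t ^ 2 * α ^ 2 / 2))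
      ≤ ∫ t in (0:ℝ)..1, t * (α ^ 2 * Real.exp (t ^ 2 * α ^ 2 / 2)) := by
  set K := Real.exp (α ^ 2 / 8) with hK
  have hint1 : IntervalIntegrable
      (fun t : ℝ => (1 - t) * (α ^ 2 * Real.exp (t ^ 2 * α ^ 2 / 2))) volume 0 1 := by
    apply Continuous.intervalIntegrable; fun_prop
  have hint2 : IntervalIntegrable
      (fun t : ℝ => t * (α ^ 2 * Real.exp (t ^ 2 * α ^ 2 / 2))) volume 0 1 := by
    apply Continuous.intervalIntegrable; fun_prop
  rw [← sub_nonneg, ← intervalIntegral.integral_sub hint2 hint1]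
  have key : ∀ t ∈ Set.Icc (0:ℝ) 1,
      0 ≤ (2 * t - 1) * (α ^ 2 * Real.exp (t ^ 2 * α ^ 2 / 2) - α ^ 2 * K) := by
    intro t ht
    rcases le_total t (1/2) with h | h
    · have hle : t ^ 2 * α ^ 2 / 2 ≤ α ^ 2 / 8 := by
        nlinarith [mul_nonneg (sq_nonneg α) (mul_nonneg (sub_nonneg.2 h)
          (by linarith [ht.1] : (0:ℝ) ≤ 1/2 + t))]
      have h2 := Real.exp_le_exp.mpr hle
      have hfac : α ^ 2 * Real.exp (t ^ 2 * α ^ 2 / 2) - α ^ 2 * K ≤ 0 := by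
        have := mul_le_mul_of_nonneg_left h2 (sq_nonneg α)
        simpa [hK] using sub_nonpos.2 this
      have := mul_nonneg (neg_nonneg.2 (by linarith : 2 * t - 1 ≤ 0)) (neg_nonneg.2 hfac)
      calc (0:ℝ) ≤ (1 - 2*t) * (α ^ 2 * K - α ^ 2 * Real.exp (t ^ 2 * α ^ 2 / 2)) := by
              simpa [neg_mul_neg] using this
        _ = (2 * t - 1) * (α ^ 2 * Real.exp (t ^ 2 * α ^ 2 / 2) - α ^ 2 * K) := by ring
    · have hle : α ^ 2 / 8 ≤ t ^ 2 * α ^ 2 / 2 := by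
        nlinarith [mul_nonneg (sq_nonneg α) (mul_nonneg (sub_nonneg.2 h)
          (by linarith [ht.1] : (0:ℝ) ≤ t + 1/2))]
      have h2 := Real.exp_le_exp.mpr hle
      have hfac : 0 ≤ α ^ 2 * Real.exp (t ^ 2 * α ^ 2 / 2) - α ^ 2 * K := by
        have := mul_le_mul_of_nonneg_left h2 (sq_nonneg α)
        simpa [hK] using sub_nonneg.2 this
      exact mul_nonneg (by linarith) hfac
  have h1 : (0:ℝ) ≤ ∫ t in (0:ℝ)..1,
      (2 * t - 1) * (α ^ 2 * Real.exp (t ^ 2 * α ^ 2 / 2) - α ^ 2 * K) :=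
    intervalIntegral.integral_nonneg zero_le_one key
  have hintc : IntervalIntegrable
      (fun t : ℝ => (2 * t - 1) * (α ^ 2 * K)) volume 0 1 := by
    apply Continuous.intervalIntegrable; fun_prop
  have hintd : IntervalIntegrable
      (fun t : ℝ => (2 * t - 1) * (α ^ 2 * Real.exp (t ^ 2 * α ^ 2 / 2) - α ^ 2 * K))
        volume 0 1 := by
    apply Continuous.intervalIntegrable; fun_prop
  have hzero : (∫ t in (0:ℝ)..1, (2 * t - 1) * (α ^ 2 * K)) = 0 := by
    have : (fun t : ℝ => (2 * t - 1) * (α ^ 2 * K))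
        = fun t : ℝ => (2 * (α ^ 2 * K)) * t - α ^ 2 * K := by funext t; ring
    rw [this, intervalIntegral.integral_sub (by apply Continuous.intervalIntegrable; fun_prop)
      (by apply Continuous.intervalIntegrable; fun_prop),
      intervalIntegral.integral_const_mul, integral_id,
      intervalIntegral.integral_const]
    simp [smul_eq_mul]
    ring
  have heq : ∫ t in (0:ℝ)..1, (t * (α ^ 2 * Real.exp (t ^ 2 * α ^ 2 / 2))
      - (1 - t) * (α ^ 2 * Real.exp (t ^ 2 * α ^ 2 / 2)))
      = (∫ t in (0:ℝ)..1, (2 * t - 1) * (α ^ 2 * Real.exp (t ^ 2 * α ^ 2 / 2) - α ^ 2 * K))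
        + ∫ t in (0:ℝ)..1, (2 * t - 1) * (α ^ 2 * K) := by
    rw [← intervalIntegral.integral_add hintd hintc]
    congr 1; funext t; ring
  rw [heq, hzero, add_zero]
  exact h1

theorem hoeffding_complex_cor {Ω : Type*} [MeasurableSpace Ω] (μ : Measure Ω)
    [IsProbabilityMeasure μ] (Z : Ω → ℂ) (hm : Measurable Z)
    (α : ℝ) (hα : 0 ≤ α)
    (hbdd : ∀ᵐ ω ∂μ, ‖Z ω - ∫ ω', Z ω' ∂μ‖ ≤ α) :
    ‖(∫ ω, Complex.exp (Z ω - ∫ ω', Z ω' ∂μ) ∂μ) - 1‖ ≤ Real.exp (α ^ 2 / 2) - 1 := by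
  set m : ℂ := ∫ ω', Z ω' ∂μ with hm_def
  rcases eq_or_lt_of_le hα with h0 | hα
  · -- degenerate case α = 0
    have hz : ∀ᵐ ω ∂μ, Complex.exp (Z ω - m) = 1 := by
      filter_upwards [hbdd] with ω h
      have h1 : ‖Z ω - m‖ ≤ 0 := h0 ▸ h
      have : Z ω - m = 0 := norm_le_zero_iff.mp h1
      rw [this, Complex.exp_zero]
    rw [integral_congr_ae hz]
    simp [← h0]
  -- main case 0 < α
  set W : Ω → ℂ := fun ω => Z ω - m with hW_def
  have hmW : Measurable W := hm.sub measurable_const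
  set W' : Ω → ℂ := fun ω => if ‖W ω‖ ≤ α then W ω else 0 with hW'_def
  have hmW' : Measurable W' :=
    Measurable.ite (measurableSet_le hmW.norm measurable_const) hmW measurable_const
  have hW'bd : ∀ ω, ‖W' ω‖ ≤ α := by
    intro ω
    show ‖if ‖W ω‖ ≤ α then W ω else 0‖ ≤ α
    by_cases h : ‖W ω‖ ≤ α
    · rw [if_pos h]; exact h
    · rw [if_neg h, norm_zero]; exact hα.le
  have hae : ∀ᵐ ω ∂μ, W' ω = W ω := by
    filter_upwards [hbdd] with ω h
    exact if_pos h
  have hZi : Integrable Z μ := by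
    refine Integrable.mono' (integrable_const (α + ‖m‖)) hm.aestronglyMeasurable ?_
    filter_upwards [hbdd] with ω h
    calc ‖Z ω‖ = ‖(Z ω - m) + m‖ := by ring_nf
      _ ≤ ‖Z ω - m‖ + ‖m‖ := norm_add_le _ _
      _ ≤ α + ‖m‖ := by linarith
  have hWi : Integrable W μ := hZi.sub (integrable_const m)
  have hW0 : ∫ ω, W ω ∂μ = 0 := by
    simp only [hW_def]
    rw [integral_sub hZi (integrable_const m), integral_const]
    simp [hm_def]
  have hW'i : Integrable W' μ := hWi.congr (hae.mono fun ω h => h.symm)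
  have hW'0 : ∫ ω, W' ω ∂μ = 0 := by rw [integral_congr_ae hae]; exact hW0
  set X : Ω → ℝ := fun ω => (W' ω).re with hX_def
  have hXm : Measurable X := Complex.measurable_re.comp hmW'
  have hXb : ∀ ω, |X ω| ≤ α := fun ω =>
    (Complex.abs_re_le_norm _).trans (by exact hW'bd ω)
  have hX0 : ∫ ω, X ω ∂μ = 0 := by
    have h := integral_re (μ := μ) hW'i
    simp only [RCLike.re_to_complex] at h
    rw [hX_def]
    simp only [h, hW'0, Complex.zero_re]
  set F : ℝ → ℂ := fun t => ∫ ω, (W' ω) ^ 2 * Complex.exp ((t : ℂ) * W' ω) ∂μ with hF_def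
  -- pointwise-in-t bound
  have hFbd : ∀ t ∈ Set.Ioc (0:ℝ) 1, ‖F t‖ ≤ α ^ 2 * Real.exp (t ^ 2 * α ^ 2 / 2) := by
    intro t ht
    have hexpi : Integrable (fun ω => Real.exp (t * X ω)) μ := by
      refine Integrable.mono' (integrable_const (Real.exp α)) ?_ ?_
      · exact (Real.measurable_exp.comp (hXm.const_mul t)).aestronglyMeasurable
      · refine Filter.Eventually.of_forall fun ω => ?_
        rw [Real.norm_eq_abs, abs_of_pos (Real.exp_pos _)]
        apply Real.exp_le_exp.mpr
        calc t * X ω ≤ |t * X ω| := le_abs_self _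
          _ = t * |X ω| := by rw [abs_mul, abs_of_pos ht.1]
          _ ≤ 1 * α := by
              apply mul_le_mul ht.2 (hXb ω) (abs_nonneg _) zero_le_one
          _ = α := one_mul α
    have step1 : ‖F t‖ ≤ ∫ ω, α ^ 2 * Real.exp (t * X ω) ∂μ := by
      refine norm_integral_le_of_norm_le (hexpi.const_mul _) ?_
      refine Filter.Eventually.of_forall fun ω => ?_
      rw [norm_mul, norm_pow, Complex.norm_exp]
      have hre : ((t : ℂ) * W' ω).re = t * X ω := Complex.re_ofReal_mul t (W' ω)
      rw [hre]
      apply mul_le_mul_of_nonneg_right _ (Real.exp_pos _).le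
      exact pow_le_pow_left₀ (norm_nonneg _) (hW'bd ω) 2
    have step2 : ∫ ω, α ^ 2 * Real.exp (t * X ω) ∂μ = α ^ 2 * ∫ ω, Real.exp (t * X ω) ∂μ :=
      integral_const_mul _ _
    have step3 : ∫ ω, Real.exp (t * X ω) ∂μ ≤ Real.cosh (t * α) := by
      apply integral_exp_le_cosh μ (hXm.const_mul t) (mul_pos ht.1 hα)
      · intro ω
        rw [abs_mul, abs_of_pos ht.1]
        exact mul_le_mul_of_nonneg_left (hXb ω) ht.1.le
      · rw [integral_const_mul, hX0, mul_zero]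
    have step4 : Real.cosh (t * α) ≤ Real.exp (t ^ 2 * α ^ 2 / 2) := by
      have := Real.cosh_le_exp_half_sq (t * α)
      rwa [mul_pow] at this
    calc ‖F t‖ ≤ α ^ 2 * ∫ ω, Real.exp (t * X ω) ∂μ := by rw [← step2]; exact step1
      _ ≤ α ^ 2 * Real.exp (t ^ 2 * α ^ 2 / 2) := by
          apply mul_le_mul_of_nonneg_left (step3.trans step4) (sq_nonneg α)
  -- integrability of exp(W')
  have hI1 : Integrable (fun ω => Complex.exp (W' ω)) μ := by
    refine Integrable.mono' (integrable_const (Real.exp α)) ?_ ?_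
    · exact (Complex.measurable_exp.comp hmW').aestronglyMeasurable
    · refine Filter.Eventually.of_forall fun ω => ?_
      rw [Complex.norm_exp]
      apply Real.exp_le_exp.mpr
      calc (W' ω).re ≤ |(W' ω).re| := le_abs_self _
        _ ≤ α := hXb ω
  have hI2 : Integrable (fun ω => Complex.exp (W' ω) - 1) μ := by
    apply Integrable.sub hI1 (integrable_const 1)
  have hsplit : (∫ ω, Complex.exp (W' ω) ∂μ) - 1
      = ∫ ω, (Complex.exp (W' ω) - 1 - W' ω) ∂μ := by
    rw [integral_sub hI2 hW'i, integral_sub hI1 (integrable_const 1), integral_const, hW'0]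
    simp
  -- Fubini
  set ν : Measure ℝ := volume.restrict (Set.Ioc (0:ℝ) 1) with hν_def
  haveI : IsFiniteMeasure ν := by
    constructor
    rw [hν_def, Measure.restrict_apply_univ, Real.volume_Ioc]
    norm_num
  have hmeas_p : Measurable (Function.uncurry fun ω (t : ℝ) =>
      ((1 - t : ℝ) • ((W' ω) ^ 2 * Complex.exp ((t : ℂ) * W' ω)))) := by
    refine Measurable.smul (f := fun z : Ω × ℝ => (1 - z.2 : ℝ))
      (g := fun z : Ω × ℝ => (W' z.1) ^ 2 * Complex.exp ((z.2 : ℂ) * W' z.1)) ?_ ?_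
    · exact measurable_const.sub measurable_snd
    · exact ((hmW'.comp measurable_fst).pow_const 2).mul
        (Complex.measurable_exp.comp ((Complex.measurable_ofReal.comp measurable_snd).mul
          (hmW'.comp measurable_fst)))
  have hz2 : ∀ᵐ z ∂(μ.prod ν), z.2 ∈ Set.Ioc (0:ℝ) 1 := by
    have hrw : μ.prod ν = (μ.prod volume).restrict (Set.univ ×ˢ Set.Ioc (0:ℝ) 1) := by
      rw [hν_def, ← Measure.prod_restrict, Measure.restrict_univ]
    rw [hrw]
    filter_upwards [ae_restrict_mem (MeasurableSet.univ.prod measurableSet_Ioc)] with z hz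
    exact hz.2
  have hprod_int : Integrable (Function.uncurry fun ω (t : ℝ) =>
      ((1 - t : ℝ) • ((W' ω) ^ 2 * Complex.exp ((t : ℂ) * W' ω)))) (μ.prod ν) := by
    refine Integrable.mono' (integrable_const (α ^ 2 * Real.exp α))
      hmeas_p.aestronglyMeasurable ?_
    filter_upwards [hz2] with z hz
    rw [Function.uncurry]
    simp only [norm_smul, norm_mul, norm_pow, Real.norm_eq_abs,
      Complex.norm_exp, Complex.re_ofReal_mul]
    calc |1 - z.2| * (‖W' z.1‖ ^ 2 * Real.exp (z.2 * (W' z.1).re))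
        ≤ 1 * (α ^ 2 * Real.exp α) := by
          apply mul_le_mul
          · rw [abs_of_nonneg (by linarith [hz.2] : (0:ℝ) ≤ 1 - z.2)]; linarith [hz.1]
          · apply mul_le_mul
            · exact pow_le_pow_left₀ (norm_nonneg _) (hW'bd z.1) 2
            · apply Real.exp_le_exp.mpr
              calc z.2 * (W' z.1).re ≤ |z.2 * (W' z.1).re| := le_abs_self _
                _ = z.2 * |(W' z.1).re| := by rw [abs_mul, abs_of_pos hz.1]
                _ ≤ 1 * α := mul_le_mul hz.2 (hXb z.1) (abs_nonneg _) zero_le_one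
                _ = α := one_mul α
            · exact (Real.exp_pos _).le
            · positivity
          · positivity
          · norm_num
      _ = α ^ 2 * Real.exp α := one_mul _
  have hswap := integral_integral_swap hprod_int
  have hkey : ∀ ω, Complex.exp (W' ω) - 1 - W' ω
      = ∫ t, ((1 - t : ℝ) • ((W' ω) ^ 2 * Complex.exp ((t : ℂ) * W' ω))) ∂ν := by
    intro ω
    rw [hν_def, ← intervalIntegral.integral_of_le zero_le_one]
    exact (cexp_taylor (W' ω)).symm
  have hmid : ∫ ω, (Complex.exp (W' ω) - 1 - W' ω) ∂μ
      = ∫ t in (0:ℝ)..1, ((1 - t : ℝ) • F t) := by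
    calc ∫ ω, (Complex.exp (W' ω) - 1 - W' ω) ∂μ
        = ∫ ω, (∫ t, ((1 - t : ℝ) • ((W' ω) ^ 2 * Complex.exp ((t : ℂ) * W' ω))) ∂ν) ∂μ := by
          exact integral_congr_ae (Filter.Eventually.of_forall fun ω => hkey ω)
      _ = ∫ t, (∫ ω, ((1 - t : ℝ) • ((W' ω) ^ 2 * Complex.exp ((t : ℂ) * W' ω))) ∂μ) ∂ν :=
          hswap
      _ = ∫ t, ((1 - t : ℝ) • F t) ∂ν := by
          refine integral_congr_ae (Filter.Eventually.of_forall fun t => ?_)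
          rw [hF_def]
          exact integral_smul _ _
      _ = ∫ t in (0:ℝ)..1, ((1 - t : ℝ) • F t) := by
          rw [hν_def, ← intervalIntegral.integral_of_le zero_le_one]
  -- final estimates
  have hnorm : ‖∫ t in (0:ℝ)..1, ((1 - t : ℝ) • F t)‖
      ≤ |∫ t in (0:ℝ)..1, (1 - t) * (α ^ 2 * Real.exp (t ^ 2 * α ^ 2 / 2))| := by
    apply intervalIntegral.norm_integral_le_abs_of_norm_le
    · rw [Set.uIoc_of_le zero_le_one]
      filter_upwards [ae_restrict_mem measurableSet_Ioc] with t ht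
      rw [norm_smul, Real.norm_eq_abs, abs_of_nonneg (by linarith [ht.2] : (0:ℝ) ≤ 1 - t)]
      exact mul_le_mul_of_nonneg_left (hFbd t ht) (by linarith [ht.2])
    · apply Continuous.intervalIntegrable; fun_prop
  have habs : |∫ t in (0:ℝ)..1, (1 - t) * (α ^ 2 * Real.exp (t ^ 2 * α ^ 2 / 2))|
      = ∫ t in (0:ℝ)..1, (1 - t) * (α ^ 2 * Real.exp (t ^ 2 * α ^ 2 / 2)) := by
    apply abs_of_nonneg
    apply intervalIntegral.integral_nonneg zero_le_one
    intro u hu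
    have : (0:ℝ) ≤ 1 - u := by linarith [hu.2]
    positivity
  have hgoal_eq : (∫ ω, Complex.exp (Z ω - m) ∂μ) = ∫ ω, Complex.exp (W' ω) ∂μ := by
    refine integral_congr_ae ?_
    filter_upwards [hae] with ω h
    rw [h]
  calc ‖(∫ ω, Complex.exp (Z ω - m) ∂μ) - 1‖
      = ‖∫ t in (0:ℝ)..1, ((1 - t : ℝ) • F t)‖ := by rw [hgoal_eq, hsplit, hmid]
    _ ≤ |∫ t in (0:ℝ)..1, (1 - t) * (α ^ 2 * Real.exp (t ^ 2 * α ^ 2 / 2))| := hnorm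
    _ = ∫ t in (0:ℝ)..1, (1 - t) * (α ^ 2 * Real.exp (t ^ 2 * α ^ 2 / 2)) := habs
    _ ≤ ∫ t in (0:ℝ)..1, t * (α ^ 2 * Real.exp (t ^ 2 * α ^ 2 / 2)) := integral_comparison α
    _ = Real.exp (α ^ 2 / 2) - 1 := ftc_exp_sq α
end

section
/- Let Z be a complex random variable with E[Z] = 0 supported on exactly two points, lying on a line through the origin, so Z = e^{iθ}·X for a real mean-zero random variable X supported on {-x, x'} with x, x' ≥ 0. If the diameter of the support of Z is at most d, then |E[e^Z] - 1| ≤ E[e^X] - 1 ≤ e^{d²/8} - 1 (after replacing X by -X if necessary so that all moments of X are nonnegative). -/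
open MeasureTheory

open scoped Nat


lemma hoeff_core (t s : ℝ) (ht0 : 0 ≤ t) (ht1 : t ≤ 1) (hs : 0 ≤ s) :
    (1 - t) * Real.exp (-(t * s)) + t * Real.exp ((1 - t) * s) ≤ Real.exp (s ^ 2 / 8) := by
  set D : ℝ → ℝ := fun u => 1 - t + t * Real.exp u with hDdef
  have hD : ∀ u, 0 < D u := by
    intro u
    rcases lt_or_eq_of_le ht1 with h | h
    · have : 0 < 1 - t := by linarith
      have : 0 ≤ t * Real.exp u := mul_nonneg ht0 (Real.exp_pos u).le
      simp only [hDdef]; linarith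
    · have : 0 < t * Real.exp u := by
        rw [h]; positivity
      simp only [hDdef]; linarith
  have hDderiv : ∀ u, HasDerivAt D (t * Real.exp u) u := by
    intro u
    exact ((Real.hasDerivAt_exp u).const_mul t).const_add (1 - t)
  -- ψ
  set ψ : ℝ → ℝ := fun u => u / 4 + t - t * Real.exp u / D u with hψdef
  have hψderiv : ∀ u, HasDerivAt ψ (1 / 4 - t * Real.exp u * (1 - t) / (D u) ^ 2) u := by
    intro u
    have h1 : HasDerivAt (fun u => t * Real.exp u / D u)
        ((t * Real.exp u * D u - t * Real.exp u * (t * Real.exp u)) / (D u) ^ 2) u :=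
      ((Real.hasDerivAt_exp u).const_mul t).div (hDderiv u) (hD u).ne'
    have h2 : HasDerivAt (fun u => u / 4 + t) (1 / 4) u := by
      simpa using ((hasDerivAt_id u).div_const 4).add_const t
    have := h2.sub h1
    refine this.congr_deriv ?_
    have hne : (D u) ^ 2 ≠ 0 := pow_ne_zero 2 (hD u).ne'
    simp only [hDdef]; ring
  have hψ0 : ψ 0 = 0 := by
    simp only [hψdef, hDdef, Real.exp_zero, mul_one]
    have : (1 : ℝ) - t + t = 1 := by ring
    rw [this]; ring
  have hψmono : Monotone ψ := by
    apply monotone_of_deriv_nonneg (fun u => (hψderiv u).differentiableAt)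
    intro u
    rw [(hψderiv u).deriv]
    have h1 : 4 * (t * Real.exp u * (1 - t)) ≤ (D u) ^ 2 := by
      have : (D u) ^ 2 - 4 * (t * Real.exp u * (1 - t)) = (1 - t - t * Real.exp u) ^ 2 := by
        simp only [hDdef]; ring
      nlinarith [sq_nonneg (1 - t - t * Real.exp u)]
    have h2 : (0:ℝ) < (D u) ^ 2 := pow_pos (hD u) 2
    rw [sub_nonneg, div_le_iff₀ h2]
    simp only [hDdef] at h1 ⊢
    nlinarith
  have hψnn : ∀ u, 0 ≤ u → 0 ≤ ψ u := fun u hu => hψ0 ▸ hψmono hu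
  -- Phi
  set Phi : ℝ → ℝ := fun u => t * u + u ^ 2 / 8 - Real.log (D u) with hPhidef
  have hPhideriv : ∀ u, HasDerivAt Phi (ψ u) u := by
    intro u
    have h1 : HasDerivAt (fun u => Real.log (D u)) (t * Real.exp u / D u) u := by
      have := (hDderiv u).log (hD u).ne'
      exact this
    have h2 : HasDerivAt (fun u => t * u + u ^ 2 / 8) (t + u * 2 / 8) u := by
      have ha : HasDerivAt (fun u : ℝ => t * u) t u := by
        simpa using (hasDerivAt_id u).const_mul t
      have hb : HasDerivAt (fun u : ℝ => u ^ 2 / 8) (2 * u ^ 1 / 8) u := by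
        simpa using (hasDerivAt_pow 2 u).div_const 8
      exact ha.add (by simpa [mul_comm] using hb)
    have := h2.sub h1
    refine this.congr_deriv ?_
    simp only [hψdef]; ring
  have hPhi0 : Phi 0 = 0 := by
    simp only [hPhidef, hDdef, Real.exp_zero, mul_one]
    have : (1 : ℝ) - t + t = 1 := by ring
    rw [this, Real.log_one]; ring
  have hPhimono : MonotoneOn Phi (Set.Ici 0) := by
    apply monotoneOn_of_deriv_nonneg (convex_Ici 0)
      (fun u _ => (hPhideriv u).differentiableAt.continuousAt.continuousWithinAt)
      (fun u _ => (hPhideriv u).differentiableAt.differentiableWithinAt)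
    intro u hu
    rw [(hPhideriv u).deriv]
    exact hψnn u (le_of_lt (by simpa using hu))
  have hPhis : 0 ≤ Phi s := hPhi0 ▸ hPhimono Set.self_mem_Ici hs hs
  have hlog : Real.log (D s) ≤ t * s + s ^ 2 / 8 := by
    simp only [hPhidef] at hPhis; linarith
  have hDle : D s ≤ Real.exp (t * s + s ^ 2 / 8) :=
    (Real.log_le_iff_le_exp (hD s)).mp hlog
  have key : (1 - t) * Real.exp (-(t * s)) + t * Real.exp ((1 - t) * s)
      = Real.exp (-(t * s)) * D s := by
    have e1 : Real.exp (-(t * s)) * Real.exp s = Real.exp ((1 - t) * s) := by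
      rw [← Real.exp_add]; ring_nf
    simp only [hDdef]
    rw [mul_add]
    linear_combination (-t) * e1
  rw [key]
  calc Real.exp (-(t * s)) * D s ≤ Real.exp (-(t * s)) * Real.exp (t * s + s ^ 2 / 8) :=
        mul_le_mul_of_nonneg_left hDle (Real.exp_pos _).le
    _ = Real.exp (s ^ 2 / 8) := by rw [← Real.exp_add]; ring_nf

lemma core_mom (p q x x' : ℝ) (hp : 0 ≤ p) (hq : 0 ≤ q)
    (hbal : p * x = q * x') (hx : 0 ≤ x) (hxx' : x ≤ x') (k : ℕ) (hk : 2 ≤ k) :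
    0 ≤ p * (-x) ^ k + q * x' ^ k := by
  have hx'0 : 0 ≤ x' := hx.trans hxx'
  rcases Nat.even_or_odd k with he | ho
  · rw [he.neg_pow]
    positivity
  · obtain ⟨m, rfl⟩ : ∃ m, k = m + 1 := ⟨k - 1, by omega⟩
    rw [ho.neg_pow, pow_succ, pow_succ]
    have h1 : x ^ m ≤ x' ^ m := pow_le_pow_left₀ hx hxx' m
    have h3 : 0 ≤ p * x * (x' ^ m - x ^ m) := mul_nonneg (mul_nonneg hp hx) (by linarith)
    have he : p * -(x ^ m * x) + q * (x' ^ m * x') = p * x * (x' ^ m - x ^ m) := by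
      linear_combination (-(x' ^ m)) * hbal
    linarith [he ▸ h3]

lemma hoeff_pq (p q x x' : ℝ) (hp : 0 ≤ p) (hq : 0 ≤ q) (hpq : p + q = 1)
    (hbal : p * x = q * x') (hx : 0 ≤ x) (hx' : 0 ≤ x') :
    p * Real.exp (-x) + q * Real.exp x' ≤ Real.exp ((x + x') ^ 2 / 8) := by
  rcases eq_or_lt_of_le (by positivity : (0:ℝ) ≤ x + x') with h0 | h0
  · have hx0 : x = 0 := by linarith
    have hx'0 : x' = 0 := by linarith
    simp [hx0, hx'0, ← h0, hpq]
  · set u := x + x' with hu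
    have hq' : q = x / u := by
      have h1 : q * u = x := by
        have hp1 : p = 1 - q := by linarith
        rw [hp1] at hbal
        nlinarith [hbal]
      field_simp
      linarith
    have hp' : p = 1 - x / u := by
      rw [← hq']; linarith
    have ht0 : 0 ≤ x / u := by positivity
    have ht1 : x / u ≤ 1 := by
      rw [div_le_one h0]; linarith
    have key := hoeff_core (x / u) u ht0 ht1 h0.le
    have e1 : x / u * u = x := by field_simp
    have e2 : (1 - x / u) * u = x' := by
      field_simp; ring
    rw [e1, e2] at key
    rw [hp', hq']
    exact key

lemma core_norm (w : ℂ) (hw : ‖w‖ = 1) (p q x x' : ℝ) (hp : 0 ≤ p) (hq : 0 ≤ q)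
    (hpq : p + q = 1) (hbal : p * x = q * x') (hx : 0 ≤ x) (hxx' : x ≤ x') :
    ‖(p : ℂ) * Complex.exp (w * ((-x : ℝ) : ℂ)) + (q : ℂ) * Complex.exp (w * ((x' : ℝ) : ℂ)) - 1‖
      ≤ p * Real.exp (-x) + q * Real.exp x' - 1 := by
  set m : ℕ → ℝ := fun k => p * (-x) ^ k + q * x' ^ k with hm
  have hmnn : ∀ k : ℕ, 2 ≤ k → 0 ≤ m k := fun k hk => core_mom p q x x' hp hq hbal hx hxx' k hk
  -- complex side
  set a : ℕ → ℂ := fun k => (p : ℂ) * ((w * ((-x : ℝ) : ℂ)) ^ k / (k ! : ℂ))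
      + (q : ℂ) * ((w * ((x' : ℝ) : ℂ)) ^ k / (k ! : ℂ)) with ha
  have sA : Summable fun k : ℕ => (w * ((-x : ℝ) : ℂ)) ^ k / (k ! : ℂ) :=
    NormedSpace.expSeries_div_summable _
  have sB : Summable fun k : ℕ => (w * ((x' : ℝ) : ℂ)) ^ k / (k ! : ℂ) :=
    NormedSpace.expSeries_div_summable _
  have ha_sum : Summable a := (sA.mul_left _).add (sB.mul_left _)
  have hexpC : ∀ z : ℂ, Complex.exp z = ∑' k : ℕ, z ^ k / k ! := by
    intro z
    rw [Complex.exp_eq_exp_ℂ, NormedSpace.exp_eq_tsum_div]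
  have htsum_a : ∑' k, a k = (p : ℂ) * Complex.exp (w * ((-x : ℝ) : ℂ))
      + (q : ℂ) * Complex.exp (w * ((x' : ℝ) : ℂ)) := by
    rw [Summable.tsum_add (sA.mul_left _) (sB.mul_left _), tsum_mul_left, tsum_mul_left,
      hexpC, hexpC]
  have am : ∀ k, a k = ((m k : ℝ) : ℂ) * w ^ k / (k ! : ℂ) := by
    intro k
    simp only [ha, hm]
    push_cast
    ring
  have a0 : a 0 = 1 := by
    simp only [ha, pow_zero, Nat.factorial_zero, Nat.cast_one, div_one, mul_one]
    rw [← Complex.ofReal_add, hpq, Complex.ofReal_one]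
  have hbalC : (p : ℂ) * x = (q : ℂ) * x' := by exact_mod_cast hbal
  have a1 : a 1 = 0 := by
    simp only [ha, pow_one, Nat.factorial_one, Nat.cast_one, div_one]
    push_cast
    linear_combination (-w) * hbalC
  have hA : (p : ℂ) * Complex.exp (w * ((-x : ℝ) : ℂ)) + (q : ℂ) * Complex.exp (w * ((x' : ℝ) : ℂ)) - 1
      = ∑' k, a (k + 2) := by
    have h2 := Summable.sum_add_tsum_nat_add 2 ha_sum
    rw [htsum_a] at h2
    rw [← h2]
    rw [Finset.sum_range_succ, Finset.sum_range_one, a0, a1]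
    ring
  -- real side
  set b : ℕ → ℝ := fun k => p * ((-x) ^ k / (k ! : ℝ)) + q * (x' ^ k / (k ! : ℝ)) with hb
  have sA' : Summable fun k : ℕ => (-x) ^ k / (k ! : ℝ) := Real.summable_pow_div_factorial _
  have sB' : Summable fun k : ℕ => x' ^ k / (k ! : ℝ) := Real.summable_pow_div_factorial _
  have hb_sum : Summable b := (sA'.mul_left _).add (sB'.mul_left _)
  have hexpR : ∀ z : ℝ, Real.exp z = ∑' k : ℕ, z ^ k / k ! := by
    intro z
    rw [Real.exp_eq_exp_ℝ, NormedSpace.exp_eq_tsum_div]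
  have htsum_b : ∑' k, b k = p * Real.exp (-x) + q * Real.exp x' := by
    rw [Summable.tsum_add (sA'.mul_left _) (sB'.mul_left _), tsum_mul_left, tsum_mul_left,
      hexpR, hexpR]
  have b0 : b 0 = 1 := by
    simp only [hb, pow_zero, Nat.factorial_zero, Nat.cast_one, div_one, mul_one]
    exact hpq
  have b1 : b 1 = 0 := by
    simp only [hb, pow_one, Nat.factorial_one, Nat.cast_one, div_one]
    linarith
  have hB : p * Real.exp (-x) + q * Real.exp x' - 1 = ∑' k, b (k + 2) := by
    have h2 := Summable.sum_add_tsum_nat_add 2 hb_sum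
    rw [htsum_b] at h2
    rw [← h2]
    rw [Finset.sum_range_succ, Finset.sum_range_one, b0, b1]
    ring
  -- pointwise norm equality
  have hbm : ∀ k : ℕ, 2 ≤ k → b k = m k / (k ! : ℝ) := by
    intro k _
    simp only [hb, hm]; ring
  have hnorm : ∀ k : ℕ, ‖a (k + 2)‖ = b (k + 2) := by
    intro k
    rw [am, hbm (k + 2) (by omega)]
    rw [norm_div, norm_mul, norm_pow, hw, one_pow, mul_one, Complex.norm_real,
      Complex.norm_natCast, Real.norm_eq_abs, abs_of_nonneg (hmnn (k + 2) (by omega))]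
  rw [hA, hB]
  calc ‖∑' k, a (k + 2)‖ ≤ ∑' k, ‖a (k + 2)‖ := by
        apply norm_tsum_le_tsum_norm
        apply Summable.congr (hb_sum.comp_injective (add_left_injective 2))
        intro k
        exact (hnorm k).symm
    _ = ∑' k, b (k + 2) := tsum_congr hnorm


lemma integral_two {Ω : Type*} [MeasurableSpace Ω] (μ : Measure Ω) [IsProbabilityMeasure μ]
    (X : Ω → ℝ) (hm : Measurable X) (a b : ℝ) (hab : a ≠ b)
    (hsupp : ∀ᵐ ω ∂μ, X ω = a ∨ X ω = b)
    {E : Type*} [NormedAddCommGroup E] [NormedSpace ℝ E] [CompleteSpace E] (g : ℝ → E) :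
    ∫ ω, g (X ω) ∂μ
      = (μ (X ⁻¹' {a})).toReal • g a + (μ (X ⁻¹' {b})).toReal • g b := by
  set A := X ⁻¹' {a} with hA
  set B := X ⁻¹' {b} with hB
  have hAm : MeasurableSet A := hm (measurableSet_singleton a)
  have hBm : MeasurableSet B := hm (measurableSet_singleton b)
  have hcongr : (fun ω => g (X ω))
      =ᵐ[μ] fun ω => A.indicator (fun _ => g a) ω + B.indicator (fun _ => g b) ω := by
    filter_upwards [hsupp] with ω hω
    rcases hω with h | h
    · have h1 : ω ∈ A := by simp [hA, h]
      have h2 : ω ∉ B := by simp [hB, h, hab]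
      simp [Set.indicator_apply, h1, h2, h]
    · have h1 : ω ∉ A := by simp [hA, h, Ne.symm hab]
      have h2 : ω ∈ B := by simp [hB, h]
      simp [Set.indicator_apply, h1, h2, h]
  rw [integral_congr_ae hcongr, integral_add ((integrable_const (g a)).indicator hAm)
    ((integrable_const (g b)).indicator hBm), integral_indicator_const _ hAm,
    integral_indicator_const _ hBm]
  rfl

lemma measure_two {Ω : Type*} [MeasurableSpace Ω] (μ : Measure Ω) [IsProbabilityMeasure μ]
    (X : Ω → ℝ) (hm : Measurable X) (a b : ℝ) (hab : a ≠ b)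
    (hsupp : ∀ᵐ ω ∂μ, X ω = a ∨ X ω = b) :
    (μ (X ⁻¹' {a})).toReal + (μ (X ⁻¹' {b})).toReal = 1 := by
  set A := X ⁻¹' {a} with hA
  set B := X ⁻¹' {b} with hB
  have hAm : MeasurableSet A := hm (measurableSet_singleton a)
  have hBm : MeasurableSet B := hm (measurableSet_singleton b)
  have hdisj : Disjoint A B := by
    rw [Set.disjoint_left]
    intro ω h1 h2
    exact hab (by rw [← h1.out, h2.out])
  have h0 : μ ((A ∪ B)ᶜ) = 0 := by
    have : ∀ᵐ ω ∂μ, ω ∈ A ∪ B := by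
      filter_upwards [hsupp] with ω hω
      rcases hω with h | h
      · exact Or.inl (by simp [hA, h])
      · exact Or.inr (by simp [hB, h])
    rw [Set.compl_def]
    exact ae_iff.mp this
  have hU : μ (A ∪ B) = 1 := by
    have := measure_add_measure_compl (hAm.union hBm) (μ := μ)
    rw [h0, add_zero, measure_univ] at this
    exact this
  have : μ A + μ B = 1 := by rw [← measure_union hdisj hBm, hU]
  have hAfin : μ A ≠ ⊤ := measure_ne_top μ A
  have hBfin : μ B ≠ ⊤ := measure_ne_top μ B
  rw [← ENNReal.toReal_add hAfin hBfin, this, ENNReal.toReal_one]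



theorem two_point_bound {Ω : Type*} [MeasurableSpace Ω] (μ : Measure Ω)
    [IsProbabilityMeasure μ] (X : Ω → ℝ) (hm : Measurable X)
    (θ x x' d : ℝ) (hx : 0 ≤ x) (hx' : 0 ≤ x') (hd : x + x' ≤ d)
    (hsupp : ∀ᵐ ω ∂μ, X ω = -x ∨ X ω = x')
    (hmean : ∫ ω, X ω ∂μ = 0)
    (Z : Ω → ℂ) (hZ : ∀ ω, Z ω = Complex.exp (θ * Complex.I) * (X ω : ℂ)) :
    ∃ ε : ℝ, (ε = 1 ∨ ε = -1) ∧
      (∀ k : ℕ, 2 ≤ k → 0 ≤ ∫ ω, (ε * X ω) ^ k ∂μ) ∧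
      ‖(∫ ω, Complex.exp (Z ω) ∂μ) - 1‖ ≤ (∫ ω, Real.exp (ε * X ω) ∂μ) - 1 ∧
      (∫ ω, Real.exp (ε * X ω) ∂μ) - 1 ≤ Real.exp (d ^ 2 / 8) - 1 := by
  set w : ℂ := Complex.exp (θ * Complex.I) with hwdef
  have hw : ‖w‖ = 1 := by
    rw [hwdef, Complex.norm_exp]
    norm_num [Complex.mul_re]
  have hd0 : 0 ≤ d := le_trans (by positivity) hd
  have hexpd : 1 ≤ Real.exp (d ^ 2 / 8) := Real.one_le_exp (by positivity)
  by_cases hdeg : x = 0 ∧ x' = 0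
  · obtain ⟨h1, h2⟩ := hdeg
    have hX0 : ∀ᵐ ω ∂μ, X ω = 0 := by
      filter_upwards [hsupp] with ω hω
      rcases hω with h | h <;> simp [h, h1, h2]
    refine ⟨1, Or.inl rfl, ?_, ?_, ?_⟩
    · intro k hk
      have : (fun ω => (1 * X ω) ^ k) =ᵐ[μ] fun _ => (0 : ℝ) := by
        filter_upwards [hX0] with ω h
        simp [h, zero_pow (by omega : k ≠ 0)]
      rw [integral_congr_ae this, integral_zero]
    · have hc : (fun ω => Complex.exp (Z ω)) =ᵐ[μ] fun _ => (1 : ℂ) := by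
        filter_upwards [hX0] with ω h
        simp [hZ, h]
      have hr : (fun ω => Real.exp (1 * X ω)) =ᵐ[μ] fun _ => (1 : ℝ) := by
        filter_upwards [hX0] with ω h
        simp [h]
      rw [integral_congr_ae hc, integral_congr_ae hr]
      simp
    · have hr : (fun ω => Real.exp (1 * X ω)) =ᵐ[μ] fun _ => (1 : ℝ) := by
        filter_upwards [hX0] with ω h
        simp [h]
      rw [integral_congr_ae hr]
      simp only [integral_const, measure_univ, probReal_univ, ENNReal.toReal_one, one_smul]
      linarith
  · have hne : (-x : ℝ) ≠ x' := by
      intro h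
      exact hdeg ⟨by linarith, by linarith⟩
    set p : ℝ := (μ (X ⁻¹' {-x})).toReal with hpdef
    set q : ℝ := (μ (X ⁻¹' {x'})).toReal with hqdef
    have hp : 0 ≤ p := ENNReal.toReal_nonneg
    have hq : 0 ≤ q := ENNReal.toReal_nonneg
    have hpq : p + q = 1 := measure_two μ X hm (-x) x' hne hsupp
    have hbal0 : p * (-x) + q * x' = 0 := by
      have h := integral_two μ X hm (-x) x' hne hsupp (fun z => z)
      simp only [smul_eq_mul] at h
      rw [← h]
      simpa using hmean
    have hbal : p * x = q * x' := by linarith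
    have hC : ∫ ω, Complex.exp (Z ω) ∂μ
        = (p : ℂ) * Complex.exp (w * ((-x : ℝ) : ℂ)) + (q : ℂ) * Complex.exp (w * ((x' : ℝ) : ℂ)) := by
      have h := integral_two μ X hm (-x) x' hne hsupp (fun z : ℝ => Complex.exp (w * (z : ℂ)))
      simp only [Complex.real_smul] at h
      rw [← h]
      apply integral_congr_ae
      filter_upwards with ω
      rw [hZ]
    rcases le_total x x' with hcase | hcase
    · -- ε = 1
      have hR : ∫ ω, Real.exp (1 * X ω) ∂μ = p * Real.exp (-x) + q * Real.exp x' := by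
        have h := integral_two μ X hm (-x) x' hne hsupp (fun z => Real.exp ((1 : ℝ) * z))
        simpa using h
      refine ⟨1, Or.inl rfl, ?_, ?_, ?_⟩
      · intro k hk
        have h := integral_two μ X hm (-x) x' hne hsupp (fun z => ((1 : ℝ) * z) ^ k)
        simp only [smul_eq_mul, one_mul] at h
        simp only [one_mul]
        rw [h]
        exact core_mom p q x x' hp hq hbal hx hcase k hk
      · rw [hC, hR]
        exact core_norm w hw p q x x' hp hq hpq hbal hx hcase
      · rw [hR]
        have h1 := hoeff_pq p q x x' hp hq hpq hbal hx hx'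
        have h2 : (x + x') ^ 2 / 8 ≤ d ^ 2 / 8 := by
          have := pow_le_pow_left₀ (by positivity : (0:ℝ) ≤ x + x') hd 2
          linarith
        have h3 := Real.exp_le_exp.mpr h2
        linarith
    · -- ε = -1
      have hbal' : q * x' = p * x := hbal.symm
      have hR : ∫ ω, Real.exp (-1 * X ω) ∂μ = p * Real.exp x + q * Real.exp (-x') := by
        have h := integral_two μ X hm (-x) x' hne hsupp (fun z => Real.exp ((-1 : ℝ) * z))
        simp only [smul_eq_mul] at h
        rw [h]
        norm_num
        rfl
      refine ⟨-1, Or.inr rfl, ?_, ?_, ?_⟩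
      · intro k hk
        have h := integral_two μ X hm (-x) x' hne hsupp (fun z => ((-1 : ℝ) * z) ^ k)
        simp only [smul_eq_mul] at h
        rw [h, show ((-1 : ℝ) * -x) = x by ring, show ((-1 : ℝ) * x') = -x' by ring]
        have := core_mom q p x' x hq hp hbal' hx' hcase k hk
        linarith
      · have earg1 : -w * ((-x' : ℝ) : ℂ) = w * ((x' : ℝ) : ℂ) := by push_cast; ring
        have earg2 : -w * ((x : ℝ) : ℂ) = w * ((-x : ℝ) : ℂ) := by push_cast; ring
        have hcn := core_norm (-w) (by rw [norm_neg, hw]) q p x' x hq hp (by linarith) hbal' hx' hcase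
        rw [earg1, earg2] at hcn
        rw [hC, hR]
        have e : (p : ℂ) * Complex.exp (w * ((-x : ℝ) : ℂ)) + (q : ℂ) * Complex.exp (w * ((x' : ℝ) : ℂ)) - 1
            = (q : ℂ) * Complex.exp (w * ((x' : ℝ) : ℂ)) + (p : ℂ) * Complex.exp (w * ((-x : ℝ) : ℂ)) - 1 := by
          ring
        rw [e]
        linarith [hcn]
      · rw [hR]
        have h1 := hoeff_pq q p x' x hq hp (by linarith) hbal' hx' hx
        have h2 : (x' + x) ^ 2 / 8 ≤ d ^ 2 / 8 := by
          have := pow_le_pow_left₀ (by positivity : (0:ℝ) ≤ x + x') hd 2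
          nlinarith
        have h3 := Real.exp_le_exp.mpr h2
        linarith
end

section
/- Let F : {z ∈ ℂ : |z| ≤ d} → ℂ be continuous, and let 𝒵_d denote the class of complex random variables Z with E[Z] = 0 and diam Z ≤ d, and 𝒵_d^{(3)} its subclass of variables supported on at most 3 points. Then sup_{Z ∈ 𝒵_d} |E[F(Z)]| = sup_{Z ∈ 𝒵_d^{(3)}} |E[F(Z)]|. -/
open MeasureTheory Metric Set Module Finset


-- L0: support facts
lemma exists_goodset (d : ℝ) (hd : 0 < d) (μ : Measure ℂ) [IsProbabilityMeasure μ]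
    (hmean : (∫ z, z ∂μ) = 0) (hdiam : ∀ᵐ p ∂(μ.prod μ), ‖p.1 - p.2‖ ≤ d) :
    ∃ K : Set ℂ, IsClosed K ∧ μ Kᶜ = 0 ∧ K ⊆ Metric.closedBall 0 d ∧
      (∀ z ∈ K, ∀ w ∈ K, ‖z - w‖ ≤ d) ∧ Integrable (fun z => z) μ := by
  classical
  set K : Set ℂ := {z | ∀ ε > 0, 0 < μ (Metric.ball z ε)} with hK
  -- closedness
  have hKc : IsClosed K := by
    rw [← isOpen_compl_iff, Metric.isOpen_iff]
    intro x hx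
    simp only [hK, mem_compl_iff, mem_setOf_eq, not_forall] at hx
    obtain ⟨ε, hε, hμε⟩ := hx
    have hμε0 : μ (Metric.ball x ε) = 0 := by
      simpa using hμε
    refine ⟨ε/2, by linarith, ?_⟩
    intro y hy
    simp only [hK, mem_compl_iff, mem_setOf_eq, not_forall]
    refine ⟨ε/2, by linarith, ?_⟩
    have hsub : Metric.ball y (ε/2) ⊆ Metric.ball x ε := by
      intro a ha
      have := Metric.mem_ball.1 ha
      have := Metric.mem_ball.1 hy
      exact Metric.mem_ball.2 (by
        calc dist a x ≤ dist a y + dist y x := dist_triangle _ _ _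
        _ < ε/2 + ε/2 := by linarith
        _ = ε := by ring)
    simp only [not_lt, le_zero_iff]
    exact measure_mono_null hsub hμε0
  have hKnull : μ Kᶜ = 0 := by
    set S : Set (Set ℂ) := {V | IsOpen V ∧ μ V = 0} with hS
    obtain ⟨T, hTc, hTS, hTeq⟩ := TopologicalSpace.isOpen_sUnion_countable S (fun s hs => hs.1)
    have h0 : μ (⋃₀ T) = 0 := by
      rw [measure_sUnion_null_iff hTc]
      exact fun s hs => (hTS hs).2
    refine measure_mono_null ?_ (hTeq ▸ h0)
    intro x hx
    simp only [hK, mem_compl_iff, mem_setOf_eq, not_forall] at hx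
    obtain ⟨ε, hε, hμε⟩ := hx
    have hμε0 : μ (Metric.ball x ε) = 0 := by simpa using hμε
    exact ⟨Metric.ball x ε, ⟨Metric.isOpen_ball, hμε0⟩, Metric.mem_ball_self hε⟩
  have hpair : ∀ z ∈ K, ∀ w ∈ K, ‖z - w‖ ≤ d := by
    intro z hz w hw
    by_contra hcon
    push_neg at hcon
    set ε : ℝ := (‖z - w‖ - d) / 2 with hε
    have hεpos : 0 < ε := by simp only [hε]; linarith
    have hprodnull : (μ.prod μ) {p : ℂ × ℂ | ¬ ‖p.1 - p.2‖ ≤ d} = 0 := by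
      exact hdiam
    have hsub : (Metric.ball z ε) ×ˢ (Metric.ball w ε) ⊆ {p : ℂ × ℂ | ¬ ‖p.1 - p.2‖ ≤ d} := by
      rintro ⟨a, b⟩ ⟨ha, hb⟩
      simp only [mem_setOf_eq, not_le]
      have h1 : ‖z - a‖ < ε := by
        simpa [dist_eq_norm, norm_sub_rev] using Metric.mem_ball.1 ha
      have h2 : ‖b - w‖ < ε := by
        simpa [dist_eq_norm] using Metric.mem_ball.1 hb
      have key : ‖z - w‖ ≤ ‖z - a‖ + ‖a - b‖ + ‖b - w‖ := by
        calc ‖z - w‖ = ‖(z - a) + (a - b) + (b - w)‖ := by ring_nf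
        _ ≤ ‖(z - a) + (a - b)‖ + ‖b - w‖ := norm_add_le _ _
        _ ≤ ‖z - a‖ + ‖a - b‖ + ‖b - w‖ := by gcongr; exact norm_add_le _ _
      have : ‖z - w‖ - 2*ε = d := by simp only [hε]; ring
      linarith
    have hpos : 0 < (μ.prod μ) ((Metric.ball z ε) ×ˢ (Metric.ball w ε)) := by
      rw [Measure.prod_prod]
      exact ENNReal.mul_pos (hz ε hεpos).ne' (hw ε hεpos).ne'
    have := measure_mono_null hsub hprodnull
    exact absurd this hpos.ne'
  have hKne : K.Nonempty := by
    by_contra hne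
    rw [Set.not_nonempty_iff_eq_empty] at hne
    rw [hne, compl_empty] at hKnull
    have : (μ univ) = 1 := measure_univ
    rw [hKnull] at this
    exact zero_ne_one this
  obtain ⟨z₀, hz₀⟩ := hKne
  have haeK : ∀ᵐ z ∂μ, z ∈ K := mem_ae_iff.2 hKnull
  have hint : Integrable (fun z => z) μ := by
    refine Integrable.mono' (integrable_const (d + ‖z₀‖)) measurable_id.aestronglyMeasurable ?_
    filter_upwards [haeK] with z hz
    calc ‖z‖ = ‖(z - z₀) + z₀‖ := by ring_nf
    _ ≤ ‖z - z₀‖ + ‖z₀‖ := norm_add_le _ _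
    _ ≤ d + ‖z₀‖ := by gcongr; exact hpair z hz z₀ hz₀
  refine ⟨K, hKc, hKnull, ?_, hpair, hint⟩
  intro z hz
  have hzint : (∫ w, (z - w) ∂μ) = z := by
    rw [integral_sub (integrable_const z) hint, hmean, sub_zero, integral_const]
    simp
  have hb : ‖∫ w, (z - w) ∂μ‖ ≤ d * ((μ univ).toReal) := by
    refine norm_integral_le_of_norm_le_const ?_
    filter_upwards [haeK] with w hw
    exact hpair z hz w hw
  rw [hzint] at hb
  simp only [measure_univ, ENNReal.toReal_one, mul_one] at hb
  exact Metric.mem_closedBall.2 (by simpa [dist_eq_norm] using hb)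


lemma isCompact_convexHull_of_isCompact {E : Type*} [NormedAddCommGroup E] [NormedSpace ℝ E]
    [FiniteDimensional ℝ E] {s : Set E} (hne : s.Nonempty) (hs : IsCompact s) :
    IsCompact (convexHull ℝ s) := by
  classical
  obtain ⟨s₀, hs₀⟩ := hne
  set n : ℕ := finrank ℝ E + 1 with hn
  set φ : (Fin n → ℝ) × (Fin n → E) → E := fun p => ∑ i, p.1 i • p.2 i with hφ
  have hφc : Continuous φ := by
    apply continuous_finset_sum
    intro i _
    exact ((continuous_apply i).comp continuous_fst).smul
      ((continuous_apply i).comp continuous_snd)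
  set D : Set ((Fin n → ℝ) × (Fin n → E)) :=
    (stdSimplex ℝ (Fin n)) ×ˢ (Set.pi univ fun _ => s) with hD
  have hDc : IsCompact D := (isCompact_stdSimplex _ _).prod (isCompact_univ_pi fun _ => hs)
  have himg : convexHull ℝ s = φ '' D := by
    apply Set.Subset.antisymm
    · intro x hx
      obtain ⟨ι, hι, z, w, hrange, haff, hpos, hsum, heq⟩ :=
        eq_pos_convex_span_of_mem_convexHull hx
      have hcard : Fintype.card ι ≤ n := by
        have h1 := haff.card_le_finrank_succ (k := ℝ)
        have h2 : finrank ℝ (vectorSpan ℝ (Set.range z)) ≤ finrank ℝ E :=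
          Submodule.finrank_le _
        omega
      obtain ⟨e⟩ : Nonempty (ι ↪ Fin n) :=
        Function.Embedding.nonempty_of_card_le (by simpa using hcard)
      set w' : Fin n → ℝ := fun j => ∑ i ∈ Finset.univ.filter (fun i => e i = j), w i with hw'
      set z' : Fin n → E := fun j => if h : ∃ i, e i = j then z h.choose else s₀ with hz'
      have hmem : (w', z') ∈ D := by
        constructor
        · constructor
          · intro j
            exact Finset.sum_nonneg fun i _ => (hpos i).le
          · rw [Finset.sum_fiberwise_of_maps_to (fun i _ => Finset.mem_univ (e i))]
            exact hsum
        · intro j _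
          simp only [hz']
          split
          · next h => exact hrange ⟨h.choose, rfl⟩
          · exact hs₀
      refine ⟨(w', z'), hmem, ?_⟩
      simp only [hφ]
      have : ∀ j : Fin n, w' j • z' j = ∑ i ∈ Finset.univ.filter (fun i => e i = j), w i • z i := by
        intro j
        rw [hw', Finset.sum_smul]
        apply Finset.sum_congr rfl
        intro i hi
        have hij : e i = j := (Finset.mem_filter.1 hi).2
        have hex : ∃ i', e i' = j := ⟨i, hij⟩
        have : hex.choose = i := e.injective (hex.choose_spec.trans hij.symm)
        simp only [hz', dif_pos hex, this]
      rw [Finset.sum_congr rfl (fun j _ => this j),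
        Finset.sum_fiberwise_of_maps_to (fun i _ => Finset.mem_univ (e i))]
      exact heq
    · rintro x ⟨⟨w, z⟩, ⟨hw, hz⟩, rfl⟩
      exact (convex_convexHull ℝ s).sum_mem (fun i _ => hw.1 i) hw.2
        (fun i _ => subset_convexHull ℝ s (hz i (mem_univ i)))
  rw [himg]
  exact hDc.image hφc


lemma reduce (n : ℕ) : ∀ {ι : Type} (t : Finset ι) (w : ι → ℝ) (z : ι → ℂ) (g : ℂ → ℝ),
    t.card ≤ n → (∀ i ∈ t, 0 ≤ w i) → (∑ i ∈ t, w i) = 1 → (∑ i ∈ t, w i • z i) = 0 →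
    ∃ t' : Finset ι, t' ⊆ t ∧ t'.card ≤ 3 ∧ ∃ w' : ι → ℝ, (∀ i ∈ t', 0 ≤ w' i) ∧
      (∑ i ∈ t', w' i) = 1 ∧ (∑ i ∈ t', w' i • z i) = 0 ∧
      (∑ i ∈ t, w i * g (z i)) ≤ ∑ i ∈ t', w' i * g (z i) := by
  classical
  induction n with
  | zero =>
    intro ι t w z g hn hw h1 hz
    exact ⟨t, Finset.Subset.refl t, by omega, w, hw, h1, hz, le_refl _⟩
  | succ m ih =>
    intro ι t w z g hn hw h1 hz
    by_cases hc : t.card ≤ 3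
    · exact ⟨t, Finset.Subset.refl t, hc, w, hw, h1, hz, le_refl _⟩
    push_neg at hc
    set v : ↥t → ℝ × ℂ := fun i => ((1 : ℝ), z ↑i) with hv
    have hdep : ¬ LinearIndependent ℝ v := by
      intro h
      have hle := h.fintype_card_le_finrank
      have hcard : Fintype.card ↥t = t.card := Fintype.card_coe t
      have hfr : finrank ℝ (ℝ × ℂ) = 3 := by
        rw [Module.finrank_prod, Complex.finrank_real_complex, Module.finrank_self]
      omega
    obtain ⟨u, husum, i₀, hu0⟩ := Fintype.not_linearIndependent_iff.1 hdep
    have h1u : (∑ i : ↥t, u i) = 0 := by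
      have := congrArg Prod.fst husum
      simpa [hv, Prod.fst_sum, ← Finset.univ_eq_attach] using this
    have h2u : (∑ i : ↥t, u i • z ↑i) = 0 := by
      have := congrArg Prod.snd husum
      simpa [hv, Prod.snd_sum, ← Finset.univ_eq_attach] using this
    obtain ⟨u', h1', h2', hc', hu0'⟩ : ∃ u' : ↥t → ℝ, (∑ i : ↥t, u' i) = 0 ∧
        (∑ i : ↥t, u' i • z ↑i) = 0 ∧ 0 ≤ (∑ i : ↥t, u' i * g (z ↑i)) ∧ u' i₀ ≠ 0 := by
      by_cases hsgn : 0 ≤ ∑ i : ↥t, u i * g (z ↑i)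
      · exact ⟨u, h1u, h2u, hsgn, hu0⟩
      · refine ⟨-u, ?_, ?_, ?_, by simpa using hu0⟩
        · simp only [Pi.neg_apply, Finset.sum_neg_distrib, h1u, neg_zero]
        · simp only [Pi.neg_apply, neg_smul, Finset.sum_neg_distrib, h2u, neg_zero]
        · push_neg at hsgn
          have : (∑ i : ↥t, (-u) i * g (z ↑i)) = -(∑ i : ↥t, u i * g (z ↑i)) := by
            simp only [Pi.neg_apply, neg_mul, Finset.sum_neg_distrib]
          rw [this]
          linarith
    rw [Finset.univ_eq_attach] at h1' h2' hc'
    set I : Finset ↥t := Finset.univ.filter (fun i => u' i < 0) with hI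
    have hIne : I.Nonempty := by
      by_contra h
      rw [Finset.not_nonempty_iff_eq_empty] at h
      have hall : ∀ i ∈ t.attach, 0 ≤ u' i := by
        intro i _
        by_contra hlt
        push_neg at hlt
        have : i ∈ I := Finset.mem_filter.2 ⟨Finset.mem_univ i, hlt⟩
        rw [h] at this
        exact absurd this (Finset.notMem_empty i)
      exact hu0' ((Finset.sum_eq_zero_iff_of_nonneg hall).1 h1' i₀
        (by rw [← Finset.univ_eq_attach]; exact Finset.mem_univ i₀))
    set tstar : ℝ := I.inf' hIne (fun i => w ↑i / (-u' i)) with htstar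
    have htpos : 0 ≤ tstar := by
      apply Finset.le_inf' hIne
      intro i hi
      have hneg : u' i < 0 := (Finset.mem_filter.1 hi).2
      exact div_nonneg (hw _ i.2) (by linarith)
    obtain ⟨i₁, hi₁I, hi₁⟩ := Finset.exists_mem_eq_inf' hIne (fun i => w ↑i / (-u' i))
    have hneg₁ : u' i₁ < 0 := (Finset.mem_filter.1 hi₁I).2
    set W : ι → ℝ := fun i => if h : i ∈ t then w i + tstar * u' ⟨i, h⟩ else 0 with hW
    have hWt : ∀ i : ↥t, W ↑i = w ↑i + tstar * u' i := by
      intro i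
      simp only [hW, dif_pos i.2, Subtype.coe_eta]
    have hWnn : ∀ i ∈ t, 0 ≤ W i := by
      intro i hi
      have hWi : W i = w i + tstar * u' ⟨i, hi⟩ := dif_pos hi
      rw [hWi]
      by_cases hsign : u' ⟨i, hi⟩ < 0
      · have hmem : (⟨i, hi⟩ : ↥t) ∈ I := Finset.mem_filter.2 ⟨Finset.mem_univ _, hsign⟩
        have hle : tstar ≤ w i / (-u' ⟨i, hi⟩) := Finset.inf'_le _ hmem
        have h2 : (0:ℝ) < -u' ⟨i, hi⟩ := by linarith
        rw [le_div_iff₀ h2] at hle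
        nlinarith
      · push_neg at hsign
        have := hw i hi
        nlinarith
    have hWsum : (∑ i ∈ t, W i) = 1 := by
      rw [← Finset.sum_attach t W]
      calc ∑ i ∈ t.attach, W ↑i = ∑ i ∈ t.attach, (w ↑i + tstar * u' i) :=
            Finset.sum_congr rfl fun i _ => hWt i
        _ = (∑ i ∈ t.attach, w ↑i) + tstar * ∑ i ∈ t.attach, u' i := by
            rw [Finset.sum_add_distrib, Finset.mul_sum]
        _ = 1 := by rw [Finset.sum_attach t w, h1, h1', mul_zero, add_zero]
    have hWz : (∑ i ∈ t, W i • z i) = 0 := by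
      rw [← Finset.sum_attach t (fun i => W i • z i)]
      calc ∑ i ∈ t.attach, W ↑i • z ↑i
          = ∑ i ∈ t.attach, (w ↑i • z ↑i + tstar • (u' i • z ↑i)) := by
            apply Finset.sum_congr rfl
            intro i _
            rw [hWt i, add_smul, smul_smul]
        _ = (∑ i ∈ t.attach, w ↑i • z ↑i) + tstar • ∑ i ∈ t.attach, u' i • z ↑i := by
            rw [Finset.sum_add_distrib, Finset.smul_sum]
        _ = 0 := by
            rw [Finset.sum_attach t (fun i => w i • z i), hz, h2', smul_zero, add_zero]
    have hWg : (∑ i ∈ t, w i * g (z i)) ≤ ∑ i ∈ t, W i * g (z i) := by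
      rw [← Finset.sum_attach t (fun i => W i * g (z i)),
        ← Finset.sum_attach t (fun i => w i * g (z i))]
      have : ∑ i ∈ t.attach, W ↑i * g (z ↑i)
          = (∑ i ∈ t.attach, w ↑i * g (z ↑i)) + tstar * ∑ i ∈ t.attach, u' i * g (z ↑i) := by
        rw [Finset.mul_sum, ← Finset.sum_add_distrib]
        apply Finset.sum_congr rfl
        intro i _
        rw [hWt i]
        ring
      rw [this]
      nlinarith [mul_nonneg htpos hc']
    have hW0 : W ↑i₁ = 0 := by
      rw [hWt i₁, htstar, hi₁]
      have hne : u' i₁ ≠ 0 := hneg₁.ne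
      field_simp
      ring
    set t₂ := t.erase ↑i₁ with ht₂
    have hcard2 : t₂.card ≤ m := by
      rw [ht₂, Finset.card_erase_of_mem i₁.2]
      omega
    have hs1 : (∑ i ∈ t₂, W i) = 1 := by
      rw [ht₂, Finset.sum_erase t hW0, hWsum]
    have hs2 : (∑ i ∈ t₂, W i • z i) = 0 := by
      rw [ht₂, Finset.sum_erase t (by rw [hW0, zero_smul]), hWz]
    obtain ⟨t', ht'sub, ht'card, w'', hw''nn, hw''1, hw''z, hw''g⟩ :=
      ih t₂ W z g hcard2 (fun i hi => hWnn i (Finset.mem_of_mem_erase hi)) hs1 hs2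
    refine ⟨t', ht'sub.trans (Finset.erase_subset _ _), ht'card, w'', hw''nn, hw''1, hw''z, ?_⟩
    calc (∑ i ∈ t, w i * g (z i)) ≤ ∑ i ∈ t, W i * g (z i) := hWg
      _ = ∑ i ∈ t₂, W i * g (z i) := by
          rw [ht₂, Finset.sum_erase t (by rw [hW0, zero_mul])]
      _ ≤ ∑ i ∈ t', w'' i * g (z i) := hw''g


lemma integral_finsum_dirac {ι : Type*} (t : Finset ι) (w : ι → ℝ) (hw : ∀ i ∈ t, 0 ≤ w i)
    (z : ι → ℂ) {E : Type*} [NormedAddCommGroup E] [NormedSpace ℝ E] [CompleteSpace E]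
    (h : ℂ → E) :
    (∫ x, h x ∂(∑ i ∈ t, (ENNReal.ofReal (w i)) • Measure.dirac (z i)))
      = ∑ i ∈ t, w i • h (z i) := by
  have hIntDirac : ∀ a : ℂ, Integrable h (Measure.dirac a) := by
    intro a
    refine (integrable_const (h a)).congr ?_
    rw [Filter.eventuallyEq_iff_exists_mem]
    exact ⟨{a}, by rw [MeasureTheory.ae_dirac_eq]; simp, fun x hx => by simp at hx; simp [hx]⟩
  rw [integral_finset_sum_measure (fun i _ => (hIntDirac (z i)).smul_measure ENNReal.ofReal_ne_top)]
  apply Finset.sum_congr rfl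
  intro i hi
  rw [integral_smul_measure, integral_dirac, ENNReal.toReal_ofReal (hw i hi)]

lemma key_lemma (d : ℝ) (hd : 0 < d) (F : ℂ → ℂ) (hF : ContinuousOn F (Metric.closedBall 0 d))
    (μ : Measure ℂ) [IsProbabilityMeasure μ] (hmean : (∫ z, z ∂μ) = 0)
    (hdiam : ∀ᵐ p ∂(μ.prod μ), ‖p.1 - p.2‖ ≤ d) :
    ∃ ν : Measure ℂ, IsProbabilityMeasure ν ∧ (∫ z, z ∂ν) = 0 ∧
      (∀ᵐ p ∂(ν.prod ν), ‖p.1 - p.2‖ ≤ d) ∧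
      (∃ s : Finset ℂ, s.card ≤ 3 ∧ ν (↑s : Set ℂ)ᶜ = 0) ∧
      ‖∫ z, F z ∂μ‖ ≤ ‖∫ z, F z ∂ν‖ := by
  classical
  obtain ⟨K, hKc, hKnull, hKball, hKpair, hint⟩ := exists_goodset d hd μ hmean hdiam
  have haeK : ∀ᵐ z ∂μ, z ∈ K := mem_ae_iff.2 hKnull
  have hKcomp : IsCompact K := (isCompact_closedBall 0 d).of_isClosed_subset hKc hKball
  have hKne : K.Nonempty := by
    by_contra hne
    rw [Set.not_nonempty_iff_eq_empty] at hne
    rw [hne, compl_empty] at hKnull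
    exact zero_ne_one (hKnull.symm.trans (measure_univ : μ univ = 1))
  set c : ℂ := ∫ z, F z ∂μ with hc
  set u : ℂ := (↑‖c‖)⁻¹ * c with hu
  have hu_norm : ‖u‖ ≤ 1 := by
    rcases eq_or_ne c 0 with h | h
    · simp [hu, h]
    · have : ‖c‖ ≠ 0 := norm_ne_zero_iff.2 h
      rw [hu, norm_mul]
      simp only [norm_inv, Complex.norm_real, norm_norm]
      rw [inv_mul_cancel₀ this]
  have hu_c : ((starRingEnd ℂ) u * c).re = ‖c‖ := by
    rcases eq_or_ne c 0 with h | h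
    · simp [hu, h]
    · have hn : (‖c‖ : ℝ) ≠ 0 := norm_ne_zero_iff.2 h
      rw [hu, map_mul, map_inv₀, Complex.conj_ofReal, mul_assoc, mul_comm ((starRingEnd ℂ) c) c,
        Complex.mul_conj, Complex.normSq_eq_norm_sq,
        ← Complex.ofReal_inv, ← Complex.ofReal_mul, Complex.ofReal_re,
        sq, ← mul_assoc, inv_mul_cancel₀ hn, one_mul]
  have hu_le : ∀ c' : ℂ, ((starRingEnd ℂ) u * c').re ≤ ‖c'‖ := by
    intro c'
    calc ((starRingEnd ℂ) u * c').re ≤ ‖(starRingEnd ℂ) u * c'‖ := Complex.re_le_norm _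
      _ = ‖u‖ * ‖c'‖ := by rw [norm_mul, RCLike.norm_conj]
      _ ≤ 1 * ‖c'‖ := by gcongr
      _ = ‖c'‖ := one_mul _
  set g : ℂ → ℝ := fun z => ((starRingEnd ℂ) u * F z).re with hg
  have hgcont : ContinuousOn g (Metric.closedBall 0 d) :=
    Complex.continuous_re.comp_continuousOn (continuousOn_const.mul hF)
  -- integrability of F
  have hFmeas : AEStronglyMeasurable F μ := by
    have h1 : AEStronglyMeasurable F (μ.restrict (Metric.closedBall 0 d)) :=
      hF.aestronglyMeasurable measurableSet_closedBall
    rwa [Measure.restrict_eq_self_of_ae_mem (haeK.mono fun z hz => hKball hz)] at h1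
  obtain ⟨M, hM⟩ := (isCompact_closedBall (0:ℂ) d).exists_bound_of_continuousOn hF
  have hFint : Integrable F μ := by
    refine Integrable.mono' (integrable_const M) hFmeas ?_
    filter_upwards [haeK] with z hz
    exact hM z (hKball hz)
  have hgint : Integrable g μ := by
    have h1 : Integrable (fun z => (starRingEnd ℂ) u * F z) μ := hFint.const_mul _
    have h2 := h1.re
    refine h2.congr ?_
    filter_upwards [] with z
    simp [hg, RCLike.re_to_complex]
  have hmg : (∫ z, g z ∂μ) = ‖c‖ := by
    have h1 : (∫ z, ((starRingEnd ℂ) u * F z) ∂μ) = (starRingEnd ℂ) u * c :=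
      integral_const_mul _ _
    have h2 : (∫ z, g z ∂μ) = RCLike.re (∫ z, ((starRingEnd ℂ) u * F z) ∂μ) := by
      rw [← integral_re (hFint.const_mul _)]
      exact integral_congr_ae (Filter.Eventually.of_forall fun z => by
        simp [hg, RCLike.re_to_complex])
    rw [h2, h1]
    simp only [RCLike.re_to_complex]
    exact hu_c
  -- integral lies in convex hull
  set f : ℂ → ℂ × ℝ := fun z => (z, g z) with hf
  have hfint : Integrable f μ := hint.prodMk hgint
  have himgne : (f '' K).Nonempty := hKne.image f
  have himgcomp : IsCompact (f '' K) :=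
    hKcomp.image_of_continuousOn (continuousOn_id.prodMk (hgcont.mono hKball))
  have hhullcomp : IsCompact (convexHull ℝ (f '' K)) :=
    isCompact_convexHull_of_isCompact himgne himgcomp
  have hmem : (∫ z, f z ∂μ) ∈ convexHull ℝ (f '' K) := by
    refine (convex_convexHull ℝ _).integral_mem hhullcomp.isClosed ?_ hfint
    filter_upwards [haeK] with z hz
    exact subset_convexHull ℝ _ (mem_image_of_mem f hz)
  have hp : (∫ z, f z ∂μ) = ((0 : ℂ), ‖c‖) := by
    rw [hf, integral_pair hint hgint, hmean, hmg]
  rw [hp] at hmem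
  rw [_root_.convexHull_eq] at hmem
  obtain ⟨ι, t, wt, zt, hw0, hw1, hzt, hcm⟩ := hmem
  rw [Finset.centerMass_eq_of_sum_1 _ _ hw1] at hcm
  -- choose preimages
  have hch : ∀ i, i ∈ t → ∃ y, y ∈ K ∧ f y = zt i := by
    intro i hi
    obtain ⟨y, hy, hfy⟩ := hzt i hi
    exact ⟨y, hy, hfy⟩
  set ζ : ι → ℂ := fun i => if h : i ∈ t then (hch i h).choose else 0 with hζ
  have hζK : ∀ i ∈ t, ζ i ∈ K := by
    intro i hi
    simp only [hζ, dif_pos hi]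
    exact (hch i hi).choose_spec.1
  have hζf : ∀ i ∈ t, zt i = (ζ i, g (ζ i)) := by
    intro i hi
    simp only [hζ, dif_pos hi]
    exact ((hch i hi).choose_spec.2).symm
  have hζ1 : (∑ i ∈ t, wt i • ζ i) = 0 := by
    have := congrArg Prod.fst hcm
    simp only [Prod.fst_sum] at this
    rw [← this]
    apply Finset.sum_congr rfl
    intro i hi
    rw [hζf i hi]
    rfl
  have hζ2 : (∑ i ∈ t, wt i * g (ζ i)) = ‖c‖ := by
    have := congrArg Prod.snd hcm
    simp only [Prod.snd_sum] at this
    rw [← this]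
    apply Finset.sum_congr rfl
    intro i hi
    rw [hζf i hi]
    rfl
  -- reduce to three points
  obtain ⟨t', ht'sub, ht'card, w', hw'0, hw'1, hw'z, hw'g⟩ :=
    reduce t.card t wt ζ g le_rfl hw0 hw1 hζ1
  -- build the measure
  set ν : Measure ℂ := ∑ i ∈ t', (ENNReal.ofReal (w' i)) • Measure.dirac (ζ i) with hν
  have hνprob : IsProbabilityMeasure ν := by
    constructor
    rw [hν, Measure.finset_sum_apply]
    simp only [Measure.smul_apply, measure_univ, smul_eq_mul, mul_one]
    rw [← ENNReal.ofReal_sum_of_nonneg hw'0, hw'1, ENNReal.ofReal_one]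
  have hνmean : (∫ z, z ∂ν) = 0 := by
    rw [hν, integral_finsum_dirac t' w' hw'0 ζ (fun z => z)]
    exact hw'z
  have hνF : (∫ z, F z ∂ν) = ∑ i ∈ t', w' i • F (ζ i) :=
    integral_finsum_dirac t' w' hw'0 ζ F
  set s : Finset ℂ := t'.image ζ with hs
  have hscard : s.card ≤ 3 := le_trans (Finset.card_image_le) ht'card
  have hνs : ν (↑s : Set ℂ)ᶜ = 0 := by
    rw [hν, Measure.finset_sum_apply]
    apply Finset.sum_eq_zero
    intro i hi
    have hmemi : ζ i ∈ (↑s : Set ℂ) := Finset.mem_coe.2 (Finset.mem_image_of_mem ζ hi)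
    rw [Measure.smul_apply, Measure.dirac_apply' _ (s.measurableSet.compl)]
    simp [Set.indicator_of_notMem, hmemi]
  have hsK : ∀ x ∈ (↑s : Set ℂ), x ∈ K := by
    intro x hx
    obtain ⟨i, hi, rfl⟩ := Finset.mem_image.1 (Finset.mem_coe.1 hx)
    exact hζK i (ht'sub hi)
  have hνdiam : ∀ᵐ p ∂(ν.prod ν), ‖p.1 - p.2‖ ≤ d := by
    rw [ae_iff]
    have hsub : {p : ℂ × ℂ | ¬ ‖p.1 - p.2‖ ≤ d} ⊆
        ((↑s : Set ℂ)ᶜ ×ˢ Set.univ) ∪ (Set.univ ×ˢ (↑s : Set ℂ)ᶜ) := by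
      rintro ⟨a, b⟩ hab
      simp only [mem_setOf_eq, not_le] at hab
      by_contra hmem
      simp only [Set.mem_union, mem_prod, mem_compl_iff, Set.mem_univ, and_true, true_and,
        not_or, not_not] at hmem
      exact absurd (hKpair a (hsK a hmem.1) b (hsK b hmem.2)) (not_le.2 hab)
    refine measure_mono_null hsub ?_
    refine le_antisymm (le_trans (measure_union_le _ _) ?_) (by simp)
    rw [Measure.prod_prod, Measure.prod_prod, hνs]
    simp
  refine ⟨ν, hνprob, hνmean, hνdiam, ⟨s, hscard, hνs⟩, ?_⟩
  -- final inequality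
  have hfinal : (∑ i ∈ t', w' i * g (ζ i)) = ((starRingEnd ℂ) u * ∫ z, F z ∂ν).re := by
    rw [hνF, Finset.mul_sum, Complex.re_sum]
    apply Finset.sum_congr rfl
    intro i _
    rw [mul_smul_comm, Complex.real_smul, Complex.re_ofReal_mul]
  calc ‖∫ z, F z ∂μ‖ = ‖c‖ := rfl
    _ = ∑ i ∈ t, wt i * g (ζ i) := hζ2.symm
    _ ≤ ∑ i ∈ t', w' i * g (ζ i) := hw'g
    _ = ((starRingEnd ℂ) u * ∫ z, F z ∂ν).re := hfinal
    _ ≤ ‖∫ z, F z ∂ν‖ := hu_le _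


theorem sup_three_point (d : ℝ) (hd : 0 < d) (F : ℂ → ℂ)
    (hF : ContinuousOn F (Metric.closedBall 0 d)) :
    sSup {r : ℝ | ∃ μ : Measure ℂ, IsProbabilityMeasure μ ∧
        (∫ z, z ∂μ) = 0 ∧ (∀ᵐ p ∂(μ.prod μ), ‖p.1 - p.2‖ ≤ d) ∧
        r = ‖∫ z, F z ∂μ‖} =
      sSup {r : ℝ | ∃ μ : Measure ℂ, IsProbabilityMeasure μ ∧
        (∫ z, z ∂μ) = 0 ∧ (∀ᵐ p ∂(μ.prod μ), ‖p.1 - p.2‖ ≤ d) ∧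
        (∃ s : Finset ℂ, s.card ≤ 3 ∧ μ (↑s : Set ℂ)ᶜ = 0) ∧
        r = ‖∫ z, F z ∂μ‖} := by
  classical
  set A : Set ℝ := {r : ℝ | ∃ μ : Measure ℂ, IsProbabilityMeasure μ ∧
        (∫ z, z ∂μ) = 0 ∧ (∀ᵐ p ∂(μ.prod μ), ‖p.1 - p.2‖ ≤ d) ∧
        r = ‖∫ z, F z ∂μ‖} with hA
  set B : Set ℝ := {r : ℝ | ∃ μ : Measure ℂ, IsProbabilityMeasure μ ∧
        (∫ z, z ∂μ) = 0 ∧ (∀ᵐ p ∂(μ.prod μ), ‖p.1 - p.2‖ ≤ d) ∧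
        (∃ s : Finset ℂ, s.card ≤ 3 ∧ μ (↑s : Set ℂ)ᶜ = 0) ∧
        r = ‖∫ z, F z ∂μ‖} with hB
  have hBsubA : B ⊆ A := by
    rintro r ⟨μ, h1, h2, h3, _, h5⟩
    exact ⟨μ, h1, h2, h3, h5⟩
  have hdiracB : ‖F 0‖ ∈ B := by
    refine ⟨Measure.dirac 0, inferInstance, ?_, ?_, ?_, ?_⟩
    · rw [integral_dirac]
    · rw [Measure.dirac_prod_dirac, MeasureTheory.ae_dirac_eq]
      simp [hd.le]
    · refine ⟨{0}, by simp, ?_⟩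
      rw [Measure.dirac_apply' _ (by simp : MeasurableSet ((↑({0} : Finset ℂ) : Set ℂ))ᶜ)]
      simp
    · rw [integral_dirac]
  have hAbdd : BddAbove A := by
    obtain ⟨M, hM⟩ := (isCompact_closedBall (0:ℂ) d).exists_bound_of_continuousOn hF
    refine ⟨M, ?_⟩
    rintro r ⟨μ, h1, h2, h3, h5⟩
    haveI := h1
    obtain ⟨K, hKc, hKnull, hKball, hKpair, hint⟩ := exists_goodset d hd μ h2 h3
    have haeK : ∀ᵐ z ∂μ, z ∈ K := mem_ae_iff.2 hKnull
    have hb : ‖∫ z, F z ∂μ‖ ≤ M * (μ univ).toReal := by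
      refine norm_integral_le_of_norm_le_const ?_
      filter_upwards [haeK] with z hz
      exact hM z (hKball hz)
    rw [h5]
    simpa using hb
  have hBbdd : BddAbove B := hAbdd.mono hBsubA
  have hAne : A.Nonempty := ⟨‖F 0‖, hBsubA hdiracB⟩
  have hBne : B.Nonempty := ⟨‖F 0‖, hdiracB⟩
  refine le_antisymm ?_ (csSup_le_csSup hAbdd hBne hBsubA)
  refine csSup_le hAne ?_
  rintro r ⟨μ, h1, h2, h3, h5⟩
  haveI := h1
  obtain ⟨ν, hν1, hν2, hν3, hν4, hν5⟩ := key_lemma d hd F hF μ h2 h3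
  have hmemB : ‖∫ z, F z ∂ν‖ ∈ B := ⟨ν, hν1, hν2, hν3, hν4, rfl⟩
  rw [h5]
  exact le_csSup_of_le hBbdd hmemB hν5
end

section
/- Any complex random variable Z ∈ 𝒵_d with finite support can be written as a finite mixture of random variables in 𝒵_d^{(3)}; i.e., there exist Z_1,…,Z_n ∈ 𝒵_d each supported on at most 3 points and nonnegative weights c_1,…,c_n summing to 1 such that P(Z ∈ A) = Σ_k c_k P(Z_k ∈ A) for all measurable A ⊆ ℂ. -/
open MeasureTheory

private lemma caratheodory_complex {S : Set ℂ} (h : (0:ℂ) ∈ convexHull ℝ S) :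
    ∃ t : Finset ℂ, ↑t ⊆ S ∧ t.card ≤ 3 ∧ ∃ w : ℂ → ℝ,
      (∀ z ∈ t, 0 < w z) ∧ ∑ z ∈ t, w z = 1 ∧ ∑ z ∈ t, w z • z = 0 := by
  classical
  rw [convexHull_eq_union] at h
  simp only [Set.mem_iUnion] at h
  obtain ⟨t, hts, hai, hmem⟩ := h
  have hcard : t.card ≤ 3 := by
    have h1 := hai.card_le_finrank_succ
    have h2 : Module.finrank ℝ (vectorSpan ℝ (Set.range ((↑) : t → ℂ))) ≤ Module.finrank ℝ ℂ :=
      Submodule.finrank_le _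
    rw [Complex.finrank_real_complex] at h2
    have h3 : Fintype.card ↥t ≤ 3 := h1.trans (by omega)
    simpa [Fintype.card_coe] using h3
  rw [Finset.convexHull_eq, Set.mem_setOf_eq] at hmem
  obtain ⟨w, hw0, hw1, hwc⟩ := hmem
  rw [t.centerMass_eq_of_sum_1 id hw1] at hwc
  refine ⟨t.filter (fun z => w z ≠ 0), ?_, ?_, w, ?_, ?_, ?_⟩
  · exact (Finset.coe_subset.2 (Finset.filter_subset _ _)).trans hts
  · exact (Finset.card_filter_le _ _).trans hcard
  · intro z hz
    rw [Finset.mem_filter] at hz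
    exact (hw0 z hz.1).lt_of_ne (Ne.symm hz.2)
  · rw [Finset.sum_filter_ne_zero]; exact hw1
  · rw [Finset.sum_filter_of_ne]
    · simpa using hwc
    · intro z _ hz hw; exact hz (by rw [hw, zero_smul])

private lemma decomp : ∀ (N : ℕ) (s : Finset ℂ) (p : ℂ → ℝ),
    (s.filter fun z => p z ≠ 0).card ≤ N →
    (∀ z, 0 ≤ p z) → (∀ z ∉ s, p z = 0) →
    ∑ z ∈ s, p z = 1 → ∑ z ∈ s, p z • z = 0 →
    ∃ (n : ℕ) (c : Fin n → ℝ) (q : Fin n → ℂ → ℝ),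
      (∀ k, 0 ≤ c k) ∧ ∑ k, c k = 1 ∧
      (∀ k z, 0 ≤ q k z) ∧
      (∀ k, ∃ t : Finset ℂ, t.card ≤ 3 ∧ (∀ z ∉ t, q k z = 0) ∧ ∀ z ∈ t, p z ≠ 0 ∧ z ∈ s) ∧
      (∀ k, ∑ z ∈ s, q k z = 1) ∧ (∀ k, ∑ z ∈ s, q k z • z = 0) ∧
      (∀ z, p z = ∑ k, c k * q k z) := by
  classical
  intro N
  induction N with
  | zero =>
    intro s p hcard hpos hsupp hsum hmean
    exfalso
    have h1 : (s.filter fun z => p z ≠ 0) = ∅ := Finset.card_eq_zero.1 (Nat.le_zero.1 hcard)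
    have h2 : ∀ z ∈ s, p z = 0 := by
      intro z hz
      by_contra hne
      have : z ∈ (s.filter fun z => p z ≠ 0) := Finset.mem_filter.2 ⟨hz, hne⟩
      simp [h1] at this
    rw [Finset.sum_eq_zero h2] at hsum
    norm_num at hsum
  | succ N ih =>
    intro s p hcard hpos hsupp hsum hmean
    set s' := s.filter (fun z => p z ≠ 0) with hs'
    have hsub : s' ⊆ s := Finset.filter_subset _ _
    have hsum' : ∑ z ∈ s', p z = 1 := by
      rw [hs', Finset.sum_filter_ne_zero]; exact hsum
    have hmean' : ∑ z ∈ s', p z • z = 0 := by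
      rw [hs', Finset.sum_filter_of_ne]
      · exact hmean
      · intro z _ hz hp0; exact hz (by rw [hp0, zero_smul])
    by_cases h3 : s'.card ≤ 3
    · refine ⟨1, fun _ => 1, fun _ => p, fun _ => zero_le_one, by simp, fun _ => hpos,
        fun _ => ⟨s', h3, ?_, fun z hz => ?_⟩, fun _ => hsum, fun _ => hmean, fun z => by simp⟩
      · intro z hz
        by_cases hzs : z ∈ s
        · by_contra hne
          exact hz (Finset.mem_filter.2 ⟨hzs, hne⟩)
        · exact hsupp z hzs
      · have := Finset.mem_filter.1 hz
        exact ⟨this.2, this.1⟩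
    · -- main case: use Carathéodory and recurse
      have h0 : (0:ℂ) ∈ convexHull ℝ (↑s' : Set ℂ) := by
        have hmem := s'.centerMass_mem_convexHull (w := p) (z := id)
          (fun z _ => hpos z) (by rw [hsum']; norm_num) (fun z hz => Finset.mem_coe.2 hz)
        rw [s'.centerMass_eq_of_sum_1 id hsum'] at hmem
        simp only [id_eq] at hmem
        rwa [hmean'] at hmem
      obtain ⟨t, hts', htcard, w, hwpos, hw1, hw0⟩ := caratheodory_complex h0
      have htne : t.Nonempty := by
        rcases Finset.eq_empty_or_nonempty t with rfl | h
        · simp at hw1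
        · exact h
      have htmem : ∀ z ∈ t, p z ≠ 0 ∧ z ∈ s := by
        intro z hz
        have h := hts' (Finset.mem_coe.2 hz)
        rw [Finset.mem_coe, hs', Finset.mem_filter] at h
        exact ⟨h.2, h.1⟩
      have htsub : t ⊆ s := fun z hz => (htmem z hz).2
      have hppos : ∀ z ∈ t, 0 < p z := fun z hz => (hpos z).lt_of_ne (Ne.symm (htmem z hz).1)
      set r := t.inf' htne (fun z => p z / w z) with hr
      obtain ⟨z₀, hz₀t, hz₀'⟩ := Finset.exists_mem_eq_inf' htne (fun z => p z / w z)
      have hz₀ : r = p z₀ / w z₀ := by rw [hr]; exact hz₀'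
      have hrpos : 0 < r := by
        rw [hz₀]; exact div_pos (hppos _ hz₀t) (hwpos _ hz₀t)
      have hkey : ∀ z ∈ t, r * w z ≤ p z := by
        intro z hz
        have h1 : r ≤ p z / w z := Finset.inf'_le _ hz
        rwa [le_div_iff₀ (hwpos z hz)] at h1
      set q0 : ℂ → ℝ := fun z => if z ∈ t then w z else 0 with hq0
      have hq0nn : ∀ z, 0 ≤ q0 z := by
        intro z; rw [hq0]; dsimp only
        split
        · exact (hwpos _ ‹_›).le
        · exact le_refl _
      have hq0supp : ∀ z ∉ t, q0 z = 0 := by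
        intro z hz; rw [hq0]; simp [hz]
      have hq0sum : ∑ z ∈ s, q0 z = 1 := by
        rw [hq0]
        calc ∑ z ∈ s, (if z ∈ t then w z else 0) = ∑ z ∈ s ∩ t, w z := Finset.sum_ite_mem _ _ _
        _ = ∑ z ∈ t, w z := by rw [Finset.inter_eq_right.2 htsub]
        _ = 1 := hw1
      have hq0mean : ∑ z ∈ s, q0 z • z = 0 := by
        rw [hq0]
        calc ∑ z ∈ s, (if z ∈ t then w z else 0) • z
            = ∑ z ∈ s, (if z ∈ t then w z • z else 0) := by
              refine Finset.sum_congr rfl fun z _ => ?_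
              split <;> simp
        _ = ∑ z ∈ s ∩ t, w z • z := Finset.sum_ite_mem _ _ _
        _ = ∑ z ∈ t, w z • z := by rw [Finset.inter_eq_right.2 htsub]
        _ = 0 := hw0
      have hr1 : r ≤ 1 := by
        calc r = ∑ z ∈ t, r * w z := by rw [← Finset.mul_sum, hw1, mul_one]
        _ ≤ ∑ z ∈ t, p z := Finset.sum_le_sum hkey
        _ ≤ ∑ z ∈ s, p z := Finset.sum_le_sum_of_subset_of_nonneg htsub (fun z _ _ => hpos z)
        _ = 1 := hsum
      have hrne : r ≠ 1 := by
        intro hre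
        apply h3
        have hzero : ∑ z ∈ s, (p z - q0 z) = 0 := by
          rw [Finset.sum_sub_distrib, hsum, hq0sum, sub_self]
        have hnn : ∀ z ∈ s, 0 ≤ p z - q0 z := by
          intro z _
          rw [hq0]; dsimp only
          split
          · have := hkey z ‹_›; rw [hre, one_mul] at this; linarith
          · linarith [hpos z]
        have hple : ∀ z ∈ s, p z = q0 z := by
          intro z hz
          have := (Finset.sum_eq_zero_iff_of_nonneg hnn).1 hzero z hz
          linarith
        have hsub' : s' ⊆ t := by
          intro z hz
          have hzs : z ∈ s := hsub hz
          have hp : p z ≠ 0 := (Finset.mem_filter.1 hz).2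
          by_contra hzt
          exact hp (by rw [hple z hzs, hq0supp z hzt])
        exact (Finset.card_le_card hsub').trans htcard
      have h1r : (0:ℝ) < 1 - r := by
        rcases lt_of_le_of_ne hr1 hrne with h
        linarith
      set p' : ℂ → ℝ := fun z => (1 - r)⁻¹ * (p z - r * q0 z) with hp'
      have hsubkey : ∀ z, r * q0 z ≤ p z := by
        intro z
        rw [hq0]; dsimp only
        split
        · exact hkey z ‹_›
        · simpa using hpos z
      have hp'nn : ∀ z, 0 ≤ p' z := by
        intro z
        rw [hp']; dsimp only
        apply mul_nonneg (inv_nonneg.2 h1r.le)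
        linarith [hsubkey z]
      have hp'supp0 : ∀ z, p z = 0 → p' z = 0 := by
        intro z hz
        have h2 : p z - r * q0 z ≤ 0 := by
          rw [hz, zero_sub]
          exact neg_nonpos.2 (mul_nonneg hrpos.le (hq0nn z))
        have h4 : p' z ≤ 0 := by
          rw [hp']; dsimp only
          exact mul_nonpos_of_nonneg_of_nonpos (inv_nonneg.2 h1r.le) h2
        exact le_antisymm h4 (hp'nn z)
      have hp'z₀ : p' z₀ = 0 := by
        have hq0z₀ : q0 z₀ = w z₀ := by rw [hq0]; simp [hz₀t]
        have hrw : r * w z₀ = p z₀ := by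
          rw [hz₀]
          exact div_mul_cancel₀ _ (hwpos _ hz₀t).ne'
        rw [hp']; dsimp only
        rw [hq0z₀, hrw, sub_self, mul_zero]
      have hp'supp : ∀ z ∉ s, p' z = 0 := fun z hz => hp'supp0 z (hsupp z hz)
      have hp'sum : ∑ z ∈ s, p' z = 1 := by
        rw [hp']; dsimp only
        rw [← Finset.mul_sum, Finset.sum_sub_distrib, ← Finset.mul_sum, hsum, hq0sum, mul_one]
        field_simp
      have hp'mean : ∑ z ∈ s, p' z • z = 0 := by
        have hterm : ∀ z : ℂ, p' z • z = (1-r)⁻¹ • (p z • z) - ((1-r)⁻¹ * r) • (q0 z • z) := by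
          intro z
          rw [hp']; dsimp only
          rw [mul_sub, sub_smul, smul_smul, smul_smul]
          ring_nf
        rw [Finset.sum_congr rfl (fun z _ => hterm z), Finset.sum_sub_distrib,
          ← Finset.smul_sum, ← Finset.smul_sum, hmean, hq0mean, smul_zero, smul_zero, sub_zero]
      have hcard' : (s.filter fun z => p' z ≠ 0).card ≤ N := by
        have hz₀s' : z₀ ∈ s' := by
          rw [hs', Finset.mem_filter]
          exact ⟨(htmem z₀ hz₀t).2, (htmem z₀ hz₀t).1⟩
        have hsubset : (s.filter fun z => p' z ≠ 0) ⊆ s'.erase z₀ := by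
          intro z hz
          rw [Finset.mem_filter] at hz
          rw [Finset.mem_erase]
          refine ⟨?_, ?_⟩
          · rintro rfl; exact hz.2 hp'z₀
          · rw [hs', Finset.mem_filter]
            exact ⟨hz.1, fun hpz => hz.2 (hp'supp0 z hpz)⟩
        have h5 : s'.card ≤ N + 1 := hcard
        have h6 : (s'.erase z₀).card = s'.card - 1 := Finset.card_erase_of_mem hz₀s'
        have h7 := Finset.card_le_card hsubset
        omega
      obtain ⟨n, c, q, hc0, hc1, hqnn, hqt, hqsum, hqmean, hqmix⟩ :=
        ih s p' hcard' hp'nn hp'supp hp'sum hp'mean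
      refine ⟨n+1, Fin.cons r (fun k => (1-r) * c k), Fin.cons q0 q, ?_, ?_, ?_, ?_, ?_, ?_, ?_⟩
      · intro k
        induction k using Fin.cases with
        | zero => simpa using hrpos.le
        | succ k => simpa using mul_nonneg h1r.le (hc0 k)
      · rw [Fin.sum_univ_succ]
        simp only [Fin.cons_zero, Fin.cons_succ]
        rw [← Finset.mul_sum, hc1, mul_one]
        ring
      · intro k z
        induction k using Fin.cases with
        | zero => simpa using hq0nn z
        | succ k => simpa using hqnn k z
      · intro k
        induction k using Fin.cases with
        | zero =>
          refine ⟨t, htcard, ?_, ?_⟩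
          · intro z hz; simpa using hq0supp z hz
          · intro z hz; simpa using htmem z hz
        | succ k =>
          obtain ⟨tk, h1, h2, h4⟩ := hqt k
          refine ⟨tk, h1, ?_, ?_⟩
          · intro z hz; simpa using h2 z hz
          · intro z hz
            exact ⟨fun hpz => (h4 z hz).1 (hp'supp0 z hpz), (h4 z hz).2⟩
      · intro k
        induction k using Fin.cases with
        | zero => simpa using hq0sum
        | succ k => simpa using hqsum k
      · intro k
        induction k using Fin.cases with
        | zero => simpa using hq0mean
        | succ k => simpa using hqmean k
      · intro z
        rw [Fin.sum_univ_succ]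
        simp only [Fin.cons_zero, Fin.cons_succ]
        have h8 : ∑ k : Fin n, (1 - r) * c k * q k z = (1 - r) * p' z := by
          rw [hqmix z, Finset.mul_sum]
          exact Finset.sum_congr rfl fun k _ => by ring
        rw [h8, hp']
        field_simp
        ring

private lemma integrable_id_smul_dirac (c : ENNReal) (hc : c ≠ ⊤) (a : ℂ) :
    Integrable (fun z : ℂ => z) (c • Measure.dirac a) := by
  refine Integrable.smul_measure ?_ hc
  refine ⟨aestronglyMeasurable_id, ?_⟩
  simp only [HasFiniteIntegral]
  rw [lintegral_dirac]
  exact ENNReal.coe_lt_top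

private lemma integral_id_finsum (s : Finset ℂ) (f : ℂ → ℝ) (hf : ∀ z, 0 ≤ f z) :
    (∫ z, z ∂(∑ z ∈ s, ENNReal.ofReal (f z) • Measure.dirac z)) = ∑ z ∈ s, f z • z := by
  rw [integral_finset_sum_measure (fun z _ => integrable_id_smul_dirac _ ENNReal.ofReal_ne_top z)]
  refine Finset.sum_congr rfl fun z _ => ?_
  rw [integral_smul_measure, integral_dirac, ENNReal.toReal_ofReal (hf z)]

theorem finite_support_mixture (d : ℝ) (hd : 0 ≤ d) (μ : Measure ℂ)
    [IsProbabilityMeasure μ] (hmean : (∫ z, z ∂μ) = 0)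
    (hdiam : ∀ᵐ p ∂(μ.prod μ), ‖p.1 - p.2‖ ≤ d)
    (hfin : ∃ s : Finset ℂ, μ (↑s : Set ℂ)ᶜ = 0) :
    ∃ (n : ℕ) (c : Fin n → ℝ) (ν : Fin n → Measure ℂ),
      (∀ k, 0 ≤ c k) ∧ (∑ k, c k) = 1 ∧
      (∀ k, IsProbabilityMeasure (ν k)) ∧
      (∀ k, (∫ z, z ∂(ν k)) = 0) ∧
      (∀ k, ∀ᵐ p ∂((ν k).prod (ν k)), ‖p.1 - p.2‖ ≤ d) ∧
      (∀ k, ∃ s : Finset ℂ, s.card ≤ 3 ∧ (ν k) (↑s : Set ℂ)ᶜ = 0) ∧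
      (∀ A : Set ℂ, MeasurableSet A → μ A = ∑ k, ENNReal.ofReal (c k) * ν k A) := by
  classical
  obtain ⟨s, hs⟩ := hfin
  set p : ℂ → ℝ := fun z => (μ {z}).toReal with hp
  have hofp : ∀ z, ENNReal.ofReal (p z) = μ {z} := fun z =>
    ENNReal.ofReal_toReal (measure_ne_top μ _)
  have hpnn : ∀ z, 0 ≤ p z := fun z => ENNReal.toReal_nonneg
  have happ : ∀ A : Set ℂ, MeasurableSet A →
      μ A = ∑ z ∈ s, ENNReal.ofReal (p z) * Measure.dirac z A := by
    intro A hA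
    have h2 : μ (A \ ↑s) = 0 := measure_mono_null (fun x hx => hx.2) hs
    have h1 : μ A = μ (A ∩ ↑s) := by
      rw [← measure_inter_add_diff A s.measurableSet, h2, add_zero]
    rw [h1]
    have h3 : A ∩ ↑s = ↑(s.filter (· ∈ A)) := by
      ext z; simp [and_comm]
    rw [h3]
    rw [show (↑(s.filter (· ∈ A)) : Set ℂ) = ⋃ z ∈ s.filter (· ∈ A), {z} by
      ext x; simp]
    rw [measure_biUnion_finset ?_ (fun z _ => measurableSet_singleton z)]
    · rw [Finset.sum_filter]
      refine Finset.sum_congr rfl fun z _ => ?_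
      rw [hofp, Measure.dirac_apply' z hA, Set.indicator_apply]
      split_ifs <;> simp
    · intro a _ b _ hab
      simp only [Set.disjoint_singleton_left, Set.mem_singleton_iff]
      exact hab
  have hsum1 : ∑ z ∈ s, p z = 1 := by
    have h := happ Set.univ MeasurableSet.univ
    rw [measure_univ] at h
    have h4 : ∀ z ∈ s, ENNReal.ofReal (p z) * Measure.dirac z Set.univ
        = ENNReal.ofReal (p z) := by
      intro z _; rw [Measure.dirac_apply' z MeasurableSet.univ]; simp
    rw [Finset.sum_congr rfl h4, ← ENNReal.ofReal_sum_of_nonneg (fun z _ => hpnn z)] at h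
    rw [← ENNReal.ofReal_one] at h
    exact (ENNReal.ofReal_eq_ofReal_iff (Finset.sum_nonneg fun z _ => hpnn z) zero_le_one).1
      h.symm
  have hμeq : μ = ∑ z ∈ s, ENNReal.ofReal (p z) • Measure.dirac z := by
    ext A hA
    rw [happ A hA, Measure.finset_sum_apply]
    simp [Measure.smul_apply, smul_eq_mul]
  have hmean0 : ∑ z ∈ s, p z • z = 0 := by
    rw [← integral_id_finsum s p hpnn, ← hμeq]
    exact hmean
  have hsupp : ∀ z ∉ s, p z = 0 := by
    intro z hz
    have : μ {z} = 0 := measure_mono_null (by simpa using hz) hs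
    rw [hp]; simp [this]
  have hdiam' : ∀ z w : ℂ, p z ≠ 0 → p w ≠ 0 → ‖z - w‖ ≤ d := by
    intro z w hz hw
    by_contra hc
    have hμz : μ {z} ≠ 0 := fun h => hz (by rw [hp]; simp [h])
    have hμw : μ {w} ≠ 0 := fun h => hw (by rw [hp]; simp [h])
    have h0 : (μ.prod μ) {q : ℂ × ℂ | ¬ ‖q.1 - q.2‖ ≤ d} = 0 := ae_iff.1 hdiam
    have hsub : ({z} ×ˢ {w} : Set (ℂ × ℂ)) ⊆ {q : ℂ × ℂ | ¬ ‖q.1 - q.2‖ ≤ d} := by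
      rintro ⟨a, b⟩ ⟨ha, hb⟩
      simp only [Set.mem_singleton_iff] at ha hb
      subst ha; subst hb
      exact hc
    have h5 := measure_mono_null hsub h0
    rw [Measure.prod_prod] at h5
    exact (mul_ne_zero hμz hμw) h5
  obtain ⟨n, c, q, hc0, hc1, hqnn, hqt, hqsum, hqmean, hqmix⟩ :=
    decomp (s.filter fun z => p z ≠ 0).card s p le_rfl hpnn hsupp hsum1 hmean0
  set ν : Fin n → Measure ℂ := fun k => ∑ z ∈ s, ENNReal.ofReal (q k z) • Measure.dirac z with hν
  have hνapp : ∀ k (A : Set ℂ), ν k A = ∑ z ∈ s, ENNReal.ofReal (q k z) * Measure.dirac z A := by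
    intro k A
    rw [hν]
    rw [Measure.finset_sum_apply]
    simp [Measure.smul_apply, smul_eq_mul]
  have hprob : ∀ k, IsProbabilityMeasure (ν k) := by
    intro k
    constructor
    rw [hνapp k Set.univ]
    have h4 : ∀ z ∈ s, ENNReal.ofReal (q k z) * Measure.dirac z Set.univ
        = ENNReal.ofReal (q k z) := by
      intro z _; rw [Measure.dirac_apply' z MeasurableSet.univ]; simp
    rw [Finset.sum_congr rfl h4, ← ENNReal.ofReal_sum_of_nonneg (fun z _ => hqnn k z),
      hqsum k, ENNReal.ofReal_one]
  have hnull : ∀ k (t : Finset ℂ), (∀ z ∉ t, q k z = 0) → ν k ((↑t : Set ℂ)ᶜ) = 0 := by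
    intro k t htz
    rw [hνapp]
    refine Finset.sum_eq_zero fun z _ => ?_
    by_cases hzt : z ∈ t
    · have : Measure.dirac z ((↑t : Set ℂ)ᶜ) = 0 := by
        rw [Measure.dirac_apply' z t.measurableSet.compl, Set.indicator_apply]
        simp [hzt]
      rw [this, mul_zero]
    · rw [htz z hzt]; simp
  refine ⟨n, c, ν, hc0, hc1, hprob, ?_, ?_, ?_, ?_⟩
  · intro k
    rw [hν]
    rw [integral_id_finsum s (q k) (hqnn k)]
    exact hqmean k
  · -- diameter
    intro k
    haveI := hprob k
    obtain ⟨t, ht3, htz, htmem⟩ := hqt k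
    rw [ae_iff]
    have hνt : ν k ((↑t : Set ℂ)ᶜ) = 0 := hnull k t htz
    have hsub : {q : ℂ × ℂ | ¬ ‖q.1 - q.2‖ ≤ d} ⊆ ((↑t : Set ℂ) ×ˢ (↑t : Set ℂ))ᶜ := by
      rintro ⟨a, b⟩ hab habt
      exact hab (hdiam' a b (htmem a habt.1).1 (htmem b habt.2).1)
    refine measure_mono_null hsub ?_
    have hsub2 : ((↑t : Set ℂ) ×ˢ (↑t : Set ℂ))ᶜ ⊆
        ((↑t : Set ℂ)ᶜ ×ˢ (Set.univ : Set ℂ)) ∪ ((Set.univ : Set ℂ) ×ˢ (↑t : Set ℂ)ᶜ) := by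
      rintro ⟨a, b⟩ hab
      simp only [Set.mem_compl_iff, Set.mem_prod, not_and] at hab
      by_cases hat : a ∈ (↑t : Set ℂ)
      · exact Or.inr ⟨Set.mem_univ a, hab hat⟩
      · exact Or.inl ⟨hat, Set.mem_univ b⟩
    refine measure_mono_null hsub2 ?_
    refine measure_union_null ?_ ?_
    · rw [Measure.prod_prod, hνt, zero_mul]
    · rw [Measure.prod_prod, hνt, mul_zero]
  · -- support
    intro k
    obtain ⟨t, ht3, htz, _⟩ := hqt k
    exact ⟨t, ht3, hnull k t htz⟩
  · -- mixture
    intro A hA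
    rw [happ A hA]
    have hstep : ∀ z ∈ s, ENNReal.ofReal (p z) * Measure.dirac z A
        = ∑ k : Fin n, ENNReal.ofReal (c k) * (ENNReal.ofReal (q k z) * Measure.dirac z A) := by
      intro z _
      rw [hqmix z, ENNReal.ofReal_sum_of_nonneg (fun k _ => mul_nonneg (hc0 k) (hqnn k z)),
        Finset.sum_mul]
      refine Finset.sum_congr rfl fun k _ => ?_
      rw [ENNReal.ofReal_mul (hc0 k), mul_assoc]
    rw [Finset.sum_congr rfl hstep, Finset.sum_comm]
    refine Finset.sum_congr rfl fun k _ => ?_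
    rw [hνapp k A, Finset.mul_sum]
end

section
/- For t ≥ 3, G(t) + 1 ≤ 0.9·e^{t²/8}, where G(d) = [exp(-(e^d-1-d)/(e^d-1)) - 2·exp((d e^d - e^d + 1)/(e^d-1)) + exp((2d e^d - e^d - d + 1)/(e^d-1))]/(d(e^d-1)) - 1. -/
noncomputable def G (d : ℝ) : ℝ :=
  (Real.exp (-(Real.exp d - 1 - d) / (Real.exp d - 1))
    - 2 * Real.exp ((d * Real.exp d - Real.exp d + 1) / (Real.exp d - 1))
    + Real.exp ((2 * d * Real.exp d - Real.exp d - d + 1) / (Real.exp d - 1)))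
    / (d * (Real.exp d - 1)) - 1

open Real

/-- Taylor upper bound for exp on [0,1]. -/
lemma myExpUpper {x : ℝ} (h0 : 0 ≤ x) (h1 : x ≤ 1) :
    Real.exp x ≤ 1 + x + x^2/2 + x^3/6 + x^4/24 + x^5/120 + x^6/720 + x^7/5040
      + x^8 * 9 / 322560 := by
  have h := Real.exp_bound' h0 h1 (n := 8) (by norm_num)
  have hs : (∑ m ∈ Finset.range 8, x ^ m / m.factorial)
      = 1 + x + x^2/2 + x^3/6 + x^4/24 + x^5/120 + x^6/720 + x^7/5040 := by
    simp [Finset.sum_range_succ, Nat.factorial]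
  rw [hs] at h
  have : x ^ 8 * (8 + 1) / ((8:ℕ).factorial * 8) = x^8 * 9 / 322560 := by
    norm_num [Nat.factorial]
  linarith [h, this.le, this.ge]

/-- Taylor lower bound for exp at nonneg x (partial sum with 9 terms). -/
lemma myExpLower {x : ℝ} (h0 : 0 ≤ x) :
    1 + x + x^2/2 + x^3/6 + x^4/24 + x^5/120 + x^6/720 + x^7/5040 ≤ Real.exp x := by
  have h := Real.sum_le_exp_of_nonneg h0 8
  have hs : (∑ m ∈ Finset.range 8, x ^ m / m.factorial)
      = 1 + x + x^2/2 + x^3/6 + x^4/24 + x^5/120 + x^6/720 + x^7/5040 := by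
    simp [Finset.sum_range_succ, Nat.factorial]
  linarith [hs ▸ h]

lemma e3_eq : Real.exp 3 = Real.exp 1 * Real.exp 1 * Real.exp 1 := by
  rw [← Real.exp_add, ← Real.exp_add]; norm_num

lemma e3_lo : (20.0855 : ℝ) ≤ Real.exp 3 := by
  have h := Real.exp_one_gt_d9
  have hp := Real.exp_pos 1
  rw [e3_eq]
  nlinarith [h, hp]

lemma e3_hi : Real.exp 3 ≤ (20.08554 : ℝ) := by
  have h := Real.exp_one_lt_d9
  have hp := Real.exp_pos 1
  rw [e3_eq]
  nlinarith [h, hp]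

lemma eK_lo : (2.3228757 : ℝ) ≤ Real.exp (210703/250000 : ℝ) := by
  have := myExpLower (x := (210703/250000 : ℝ)) (by norm_num)
  nlinarith [this]

lemma hK : Real.exp (3/(Real.exp 3 - 1) - 1) ≤ 0.4306 := by
  have h3 := e3_lo
  have harg : 3/(Real.exp 3 - 1) - 1 ≤ -(210703/250000 : ℝ) := by
    have h1 : (0:ℝ) < Real.exp 3 - 1 := by linarith
    have : 3/(Real.exp 3 - 1) ≤ 3/(19.0855 : ℝ) := by
      apply div_le_div_of_nonneg_left (by norm_num) (by norm_num) (by linarith)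
    norm_num at this ⊢
    linarith
  calc Real.exp (3/(Real.exp 3 - 1) - 1) ≤ Real.exp (-(210703/250000 : ℝ)) :=
        Real.exp_le_exp.mpr harg
    _ = (Real.exp (210703/250000 : ℝ))⁻¹ := by rw [Real.exp_neg]
    _ ≤ (2.3228757 : ℝ)⁻¹ := by
        exact inv_anti₀ (by norm_num) eK_lo
    _ ≤ 0.4306 := by norm_num

lemma e02_hi : Real.exp (1/5 : ℝ) ≤ 1.2214028 := by
  have := myExpUpper (x := (1/5:ℝ)) (by norm_num) (by norm_num)
  nlinarith [this]

lemma e09_hi : Real.exp (9/10 : ℝ) ≤ 2.4596033 := by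
  have := myExpUpper (x := (9/10:ℝ)) (by norm_num) (by norm_num)
  nlinarith [this]

lemma e0875_hi : Real.exp (7/8 : ℝ) ≤ 2.3988755 := by
  have := myExpUpper (x := (7/8:ℝ)) (by norm_num) (by norm_num)
  nlinarith [this]

lemma e092_hi : Real.exp (23/25 : ℝ) ≤ 2.5092906 := by
  have := myExpUpper (x := (23/25:ℝ)) (by norm_num) (by norm_num)
  nlinarith [this]

lemma e099875_hi : Real.exp (799/800 : ℝ) ≤ 2.7148862 := by
  have := myExpUpper (x := (799/800:ℝ)) (by norm_num) (by norm_num)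
  nlinarith [this]

lemma e32_hi : Real.exp (16/5 : ℝ) ≤ 24.534 := by
  have h : (16/5:ℝ) = 3 + 1/5 := by norm_num
  rw [h, Real.exp_add]
  calc Real.exp 3 * Real.exp (1/5:ℝ) ≤ 20.08554 * 1.2214028 :=
      mul_le_mul e3_hi e02_hi (Real.exp_pos _).le (by norm_num)
    _ ≤ 24.534 := by norm_num

lemma e39_hi : Real.exp (39/10 : ℝ) ≤ 49.4046 := by
  have h : (39/10:ℝ) = 3 + 9/10 := by norm_num
  rw [h, Real.exp_add]
  calc Real.exp 3 * Real.exp (9/10:ℝ) ≤ 20.08554 * 2.4596033 :=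
      mul_le_mul e3_hi e09_hi (Real.exp_pos _).le (by norm_num)
    _ ≤ 49.4046 := by norm_num

lemma e1875_hi : Real.exp (15/8 : ℝ) ≤ 6.5209 := by
  have h : (15/8:ℝ) = 1 + 7/8 := by norm_num
  rw [h, Real.exp_add]
  calc Real.exp 1 * Real.exp (7/8:ℝ) ≤ 2.7182818286 * 2.3988755 :=
      mul_le_mul Real.exp_one_lt_d9.le e0875_hi (Real.exp_pos _).le (by norm_num)
    _ ≤ 6.5209 := by norm_num

lemma e192_hi : Real.exp (48/25 : ℝ) ≤ 6.8211 := by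
  have h : (48/25:ℝ) = 1 + 23/25 := by norm_num
  rw [h, Real.exp_add]
  calc Real.exp 1 * Real.exp (23/25:ℝ) ≤ 2.7182818286 * 2.5092906 :=
      mul_le_mul Real.exp_one_lt_d9.le e092_hi (Real.exp_pos _).le (by norm_num)
    _ ≤ 6.8211 := by norm_num

lemma e199875_hi : Real.exp (1599/800 : ℝ) ≤ 7.381 := by
  have h : (1599/800:ℝ) = 1 + 799/800 := by norm_num
  rw [h, Real.exp_add]
  calc Real.exp 1 * Real.exp (799/800:ℝ) ≤ 2.7182818286 * 2.7148862 :=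
      mul_le_mul Real.exp_one_lt_d9.le e099875_hi (Real.exp_pos _).le (by norm_num)
    _ ≤ 7.381 := by norm_num

noncomputable def uFun (t : ℝ) : ℝ := t * Real.exp (t^2/8 - t)

lemma uFun_hasDeriv (x : ℝ) :
    HasDerivAt uFun (Real.exp (x^2/8 - x) * ((x-2)^2/4)) x := by
  have h1 : HasDerivAt (fun t : ℝ => t^2/8 - t) (2 * x / 8 - 1) x := by
    have := ((hasDerivAt_pow 2 x).div_const 8).sub (hasDerivAt_id x)
    simpa [Pi.sub_def] using this
  have h2 := h1.exp
  have h3 := (hasDerivAt_id x).mul h2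
  refine h3.congr_deriv ?_
  simp only [id_eq]
  ring

lemma uFun_mono : Monotone uFun := by
  apply monotone_of_deriv_nonneg
  · exact fun x => (uFun_hasDeriv x).differentiableAt
  · intro x
    rw [(uFun_hasDeriv x).deriv]
    positivity

lemma G_add_one (t : ℝ) (ht0 : 0 < t) :
    G t + 1 = (Real.exp t - 1)/t * Real.exp (t/(Real.exp t - 1) - 1) := by
  have hE : 1 < Real.exp t := by
    have := Real.exp_lt_exp.mpr ht0
    rwa [Real.exp_zero] at this
  have hE1 : Real.exp t - 1 ≠ 0 := by linarith
  have htne : t ≠ 0 := ne_of_gt ht0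
  have e1 : -(Real.exp t - 1 - t) / (Real.exp t - 1) = t/(Real.exp t - 1) - 1 := by
    field_simp
    ring
  have e2 : (t * Real.exp t - Real.exp t + 1) / (Real.exp t - 1)
      = t + (t/(Real.exp t - 1) - 1) := by
    field_simp; ring
  have e3 : (2 * t * Real.exp t - Real.exp t - t + 1) / (Real.exp t - 1)
      = t + (t + (t/(Real.exp t - 1) - 1)) := by
    field_simp; ring
  unfold G
  rw [e1, e2, e3]
  simp only [Real.exp_add]
  field_simp
  ring

lemma frac_mono (t : ℝ) (ht : 3 ≤ t) :
    t/(Real.exp t - 1) ≤ 3/(Real.exp 3 - 1) := by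
  have h3 : (1:ℝ) < Real.exp 3 := by
    have := Real.exp_lt_exp.mpr (show (0:ℝ) < 3 by norm_num)
    rwa [Real.exp_zero] at this
  have hht : (1:ℝ) < Real.exp t := by
    have := Real.exp_lt_exp.mpr (show (0:ℝ) < t by linarith)
    rwa [Real.exp_zero] at this
  rw [div_le_div_iff₀ (by linarith) (by linarith)]
  have key : Real.exp 3 * (t - 2) ≤ Real.exp t := by
    have h1 := Real.add_one_le_exp (t - 3)
    have h2 : Real.exp 3 * Real.exp (t - 3) = Real.exp t := by
      rw [← Real.exp_add]; ring_nf
    nlinarith [Real.exp_pos 3]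
  nlinarith [mul_nonneg (sub_nonneg.mpr ht) (Real.exp_pos 3).le]

theorem G_bound_one (t : ℝ) (ht : 3 ≤ t) : G t + 1 ≤ 0.9 * Real.exp (t ^ 2 / 8) := by
  have ht0 : (0:ℝ) < t := by linarith
  have hEt : 1 < Real.exp t := by
    have := Real.exp_lt_exp.mpr ht0
    rwa [Real.exp_zero] at this
  rw [G_add_one t ht0]
  have hKt : Real.exp (t/(Real.exp t - 1) - 1) ≤ 0.4306 := by
    calc Real.exp (t/(Real.exp t - 1) - 1)
        ≤ Real.exp (3/(Real.exp 3 - 1) - 1) :=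
          Real.exp_le_exp.mpr (by linarith [frac_mono t ht])
      _ ≤ 0.4306 := hK
  -- core inequality: 0.4306 * (1 - exp(-t)) ≤ 0.9 * uFun t
  have core : (0.4306:ℝ) * (1 - Real.exp (-t)) ≤ 0.9 * uFun t := by
    rcases le_or_gt t (16/5) with hcase | hcase
    · -- 3 ≤ t ≤ 3.2
      have h1 : Real.exp (-(16/5:ℝ)) ≤ Real.exp (-t) := Real.exp_le_exp.mpr (by linarith)
      have h2 : (1/24.534 : ℝ) ≤ Real.exp (-(16/5:ℝ)) := by
        rw [Real.exp_neg, one_div]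
        exact inv_anti₀ (Real.exp_pos _) e32_hi
      have h3 : uFun 3 ≤ uFun t := uFun_mono ht
      have h4 : uFun 3 = 3 * Real.exp (-(15/8:ℝ)) := by
        unfold uFun; norm_num
      have h5 : (1/6.5209 : ℝ) ≤ Real.exp (-(15/8:ℝ)) := by
        rw [Real.exp_neg, one_div]
        exact inv_anti₀ (Real.exp_pos _) e1875_hi
      rw [h4] at h3
      linarith
    · rcases le_or_gt t (39/10) with hcase2 | hcase2
      · -- 3.2 < t ≤ 3.9
        have h1 : Real.exp (-(39/10:ℝ)) ≤ Real.exp (-t) := Real.exp_le_exp.mpr (by linarith)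
        have h2 : (1/49.4046 : ℝ) ≤ Real.exp (-(39/10:ℝ)) := by
          rw [Real.exp_neg, one_div]
          exact inv_anti₀ (Real.exp_pos _) e39_hi
        have h3 : uFun (16/5) ≤ uFun t := uFun_mono hcase.le
        have h4 : uFun (16/5) = (16/5) * Real.exp (-(48/25:ℝ)) := by
          unfold uFun; norm_num
        have h5 : (1/6.8211 : ℝ) ≤ Real.exp (-(48/25:ℝ)) := by
          rw [Real.exp_neg, one_div]
          exact inv_anti₀ (Real.exp_pos _) e192_hi
        rw [h4] at h3
        linarith
      · -- t > 3.9
        have h1 : (0:ℝ) ≤ Real.exp (-t) := (Real.exp_pos _).le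
        have h3 : uFun (39/10) ≤ uFun t := uFun_mono hcase2.le
        have h4 : uFun (39/10) = (39/10) * Real.exp (-(1599/800:ℝ)) := by
          unfold uFun; norm_num
        have h5 : (1/7.381 : ℝ) ≤ Real.exp (-(1599/800:ℝ)) := by
          rw [Real.exp_neg, one_div]
          exact inv_anti₀ (Real.exp_pos _) e199875_hi
        rw [h4] at h3
        linarith
  -- convert core to: 0.4306 * (exp t - 1) ≤ 0.9 * (t * exp (t^2/8))
  have core2 : (0.4306:ℝ) * (Real.exp t - 1) ≤ 0.9 * (t * Real.exp (t^2/8)) := by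
    have hmul := mul_le_mul_of_nonneg_right core (Real.exp_pos t).le
    have ha : (1 - Real.exp (-t)) * Real.exp t = Real.exp t - 1 := by
      rw [Real.exp_neg]
      field_simp
    have hb : Real.exp (t^2/8 - t) * Real.exp t = Real.exp (t^2/8) := by
      rw [← Real.exp_add]; ring_nf
    unfold uFun at hmul
    nlinarith [hmul, ha, hb]
  -- finish
  have hfrac : (Real.exp t - 1)/t * Real.exp (t/(Real.exp t - 1) - 1)
      ≤ (Real.exp t - 1)/t * 0.4306 := by
    apply mul_le_mul_of_nonneg_left hKt
    exact div_nonneg (by linarith) ht0.le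
  have hlast : (Real.exp t - 1)/t * 0.4306 ≤ 0.9 * Real.exp (t^2/8) := by
    rw [div_mul_eq_mul_div, div_le_iff₀ ht0]
    nlinarith [core2]
  calc (Real.exp t - 1)/t * Real.exp (t/(Real.exp t - 1) - 1)
      ≤ (Real.exp t - 1)/t * 0.4306 := hfrac
    _ ≤ 0.9 * Real.exp (t^2/8) := hlast
end

section
/- For t ≥ 3, √(G(2t) + 1) ≤ 1.65·e^{t²/8}, where G is defined by G(d) = [exp(-(e^d-1-d)/(e^d-1)) - 2·exp((d e^d - e^d + 1)/(e^d-1)) + exp((2d e^d - e^d - d + 1)/(e^d-1))]/(d(e^d-1)) - 1. -/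
set_option maxHeartbeats 1000000

private lemma aux_pos (t : ℝ) (ht : 3 ≤ t) :
    0 ≤ (2.7225/20.0856) * (2*t) * (1 + (t-4)^2/4 + (t-4)^4/32) - 1 := by
  nlinarith [sq_nonneg (t-4), sq_nonneg ((t-4)^2), sq_nonneg (t-37/10),
    mul_nonneg (sub_nonneg.2 ht) (sq_nonneg (t-37/10)),
    mul_nonneg (sub_nonneg.2 ht) (sq_nonneg ((t-4)^2))]

private lemma aux_main (t : ℝ) (ht : 3 ≤ t) : 1.02 * (2*t) - 1 ≤
    403.4287 * (1 + 2*(t-3) + 2*(t-3)^2 + (4/3)*(t-3)^3) *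
      ((2.7225/20.0856) * (2*t) * (1 + (t-4)^2/4 + (t-4)^4/32) - 1) := by
  nlinarith [sq_nonneg (t-3), sq_nonneg ((t-3)^2 - 2/5*(t-3)), sq_nonneg (t - 17/5),
    sq_nonneg ((t-3)^2), mul_nonneg (sub_nonneg.2 ht) (sq_nonneg (t-17/5)),
    sq_nonneg ((t-3)*(t-17/5)),
    mul_nonneg (mul_nonneg (sub_nonneg.2 ht) (sub_nonneg.2 ht)) (sq_nonneg (t-17/5))]

theorem G_bound_two (t : ℝ) (ht : 3 ≤ t) :
    Real.sqrt (G (2 * t) + 1) ≤ 1.65 * Real.exp (t ^ 2 / 8) := by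
  have ht0 : (0:ℝ) < t := by linarith
  have hd0 : (0:ℝ) < 2 * t := by linarith
  have hy1 : (1:ℝ) < Real.exp (2 * t) := by
    have := Real.add_one_le_exp (2 * t); linarith
  set y := Real.exp (2 * t) with hy
  have hym : (0:ℝ) < y - 1 := by linarith
  have hv : (0:ℝ) ≤ t - 3 := by linarith
  -- closed form for G (2t) + 1
  have hG : G (2 * t) + 1 = Real.exp (-(y - 1 - 2 * t) / (y - 1)) * (y - 1) / (2 * t) := by
    have hy0 : y - 1 ≠ 0 := ne_of_gt hym
    have h1 : (2 * t * y - y + 1) / (y - 1) = -(y - 1 - 2 * t) / (y - 1) + 2 * t := by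
      field_simp; ring
    have h2 : (2 * (2 * t) * y - y - 2 * t + 1) / (y - 1)
        = -(y - 1 - 2 * t) / (y - 1) + (2 * t + 2 * t) := by
      field_simp; ring
    unfold G
    rw [h1, h2, Real.exp_add, Real.exp_add, Real.exp_add, ← hy]
    field_simp
    ring
  -- numeric constants
  have hexp6 : (403.4287:ℝ) ≤ Real.exp 6 := by
    have h6 : Real.exp 6 = (Real.exp 1) ^ (6:ℕ) := by
      rw [← Real.exp_nat_mul]; norm_num
    rw [h6]
    calc (403.4287:ℝ) ≤ 2.7182818283 ^ (6:ℕ) := by norm_num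
      _ ≤ (Real.exp 1) ^ (6:ℕ) :=
        pow_le_pow_left₀ (by norm_num) Real.exp_one_gt_d9.le 6
  have hexp3 : Real.exp 3 ≤ 20.0856 := by
    have h3 : Real.exp 3 = (Real.exp 1) ^ (3:ℕ) := by
      rw [← Real.exp_nat_mul]; norm_num
    rw [h3]
    calc (Real.exp 1) ^ (3:ℕ) ≤ 2.7182818286 ^ (3:ℕ) :=
        pow_le_pow_left₀ (Real.exp_pos 1).le Real.exp_one_lt_d9.le 3
      _ ≤ 20.0856 := by norm_num
  -- lower bound for y
  have hD : 1 + 2*(t-3) + 2*(t-3)^2 + (4/3)*(t-3)^3 ≤ Real.exp (2*(t-3)) := by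
    have h := Real.sum_le_exp_of_nonneg (by linarith : (0:ℝ) ≤ 2*(t-3)) 4
    norm_num [Finset.sum_range_succ, Nat.factorial] at h
    nlinarith [h]
  have hDpos : (0:ℝ) ≤ 1 + 2*(t-3) + 2*(t-3)^2 + (4/3)*(t-3)^3 := by
    nlinarith [pow_nonneg hv 2, pow_nonneg hv 3]
  have hy_lb : 403.4287 * (1 + 2*(t-3) + 2*(t-3)^2 + (4/3)*(t-3)^3) ≤ y := by
    have hsplit : y = Real.exp 6 * Real.exp (2*(t-3)) := by
      rw [hy, ← Real.exp_add]; congr 1; ring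
    rw [hsplit]
    exact mul_le_mul hexp6 hD hDpos (Real.exp_pos 6).le
  -- epsilon
  set eps := 2 * t / (y - 1) with heps
  have heps_pos : 0 < eps := div_pos hd0 hym
  have hepsmul : eps * (y - 1) = 2 * t := div_mul_cancel₀ _ (ne_of_gt hym)
  have heps_le : eps ≤ 0.0196 := by
    rw [heps, div_le_iff₀ hym]
    nlinarith [hy_lb, pow_nonneg hv 2, pow_nonneg hv 3]
  have hexp_eps : Real.exp eps ≤ 1 + 1.02 * eps := by
    have h1 : 1 - eps ≤ Real.exp (-eps) := by
      have := Real.add_one_le_exp (-eps); linarith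
    have h2 : Real.exp eps * Real.exp (-eps) = 1 := by
      rw [← Real.exp_add]; simp
    nlinarith [Real.exp_pos eps, mul_le_mul_of_nonneg_left h1 (Real.exp_pos eps).le, h2]
  have hAeq : -(y - 1 - 2 * t) / (y - 1) = -1 + eps := by
    rw [heps]; field_simp; ring
  -- exponential lower bound for the gaussian factor
  have hX : 1 + (t-4)^2/4 + (t-4)^4/32 ≤ Real.exp ((t-4)^2/4) := by
    have h := Real.quadratic_le_exp_of_nonneg (show (0:ℝ) ≤ (t-4)^2/4 by positivity)
    nlinarith [h]
  have hXpos : (0:ℝ) < 1 + (t-4)^2/4 + (t-4)^4/32 := by positivity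
  -- polynomial facts
  have hpos := aux_pos t ht
  have h3 := aux_main t ht
  -- core inequality
  have hcore : y - 1 + 1.02 * (2*t) ≤ (2.7225/20.0856) * (2*t) * y * (1 + (t-4)^2/4 + (t-4)^4/32) := by
    have ha := (aux_main t ht).trans (mul_le_mul_of_nonneg_right hy_lb (aux_pos t ht))
    nlinarith [ha]
  have step1 : Real.exp eps * (y - 1) ≤ y - 1 + 1.02 * (2*t) := by
    calc Real.exp eps * (y - 1) ≤ (1 + 1.02 * eps) * (y - 1) :=
          mul_le_mul_of_nonneg_right hexp_eps hym.le
      _ = (y - 1) + 1.02 * (eps * (y - 1)) := by ring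
      _ = y - 1 + 1.02 * (2*t) := by rw [hepsmul]
  have step2 : (2.7225/20.0856) * (2*t) * y * (1 + (t-4)^2/4 + (t-4)^4/32)
      ≤ 2.7225 * (2*t) * y * Real.exp ((t-4)^2/4) / Real.exp 3 := by
    have hK : (0:ℝ) ≤ 2.7225 * (2*t) * y := by positivity
    have hdiv : (1 + (t-4)^2/4 + (t-4)^4/32) / 20.0856 ≤ Real.exp ((t-4)^2/4) / Real.exp 3 :=
      div_le_div₀ (Real.exp_pos _).le hX (Real.exp_pos 3) hexp3
    calc (2.7225/20.0856) * (2*t) * y * (1 + (t-4)^2/4 + (t-4)^4/32)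
        = (2.7225 * (2*t) * y) * ((1 + (t-4)^2/4 + (t-4)^4/32) / 20.0856) := by ring
      _ ≤ (2.7225 * (2*t) * y) * (Real.exp ((t-4)^2/4) / Real.exp 3) :=
          mul_le_mul_of_nonneg_left hdiv hK
      _ = 2.7225 * (2*t) * y * Real.exp ((t-4)^2/4) / Real.exp 3 := by ring
  have hrhs : 2.7225 * Real.exp (t^2/4) * (2*t) * Real.exp 1
      = 2.7225 * (2*t) * y * Real.exp ((t-4)^2/4) / Real.exp 3 := by
    rw [eq_div_iff (Real.exp_ne_zero 3), hy]
    have hee : Real.exp (t^2/4) * Real.exp 1 * Real.exp 3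
        = Real.exp (2*t) * Real.exp ((t-4)^2/4) := by
      rw [← Real.exp_add, ← Real.exp_add, ← Real.exp_add]; congr 1; ring
    linear_combination (2.7225 * (2*t)) * hee
  -- main bound
  have key : G (2 * t) + 1 ≤ 2.7225 * Real.exp (t^2/4) := by
    rw [hG, hAeq, div_le_iff₀ hd0]
    have hprod : Real.exp (-1 + eps) * Real.exp 1 = Real.exp eps := by
      rw [← Real.exp_add]; congr 1; ring
    have hle : Real.exp (-1 + eps) * (y - 1) * Real.exp 1
        ≤ 2.7225 * Real.exp (t^2/4) * (2*t) * Real.exp 1 := by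
      calc Real.exp (-1 + eps) * (y - 1) * Real.exp 1
          = (Real.exp (-1 + eps) * Real.exp 1) * (y - 1) := by ring
        _ = Real.exp eps * (y - 1) := by rw [hprod]
        _ ≤ y - 1 + 1.02 * (2*t) := step1
        _ ≤ (2.7225/20.0856) * (2*t) * y * (1 + (t-4)^2/4 + (t-4)^4/32) := hcore
        _ ≤ 2.7225 * (2*t) * y * Real.exp ((t-4)^2/4) / Real.exp 3 := step2
        _ = 2.7225 * Real.exp (t^2/4) * (2*t) * Real.exp 1 := hrhs.symm
    exact le_of_mul_le_mul_right hle (Real.exp_pos 1)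
  -- conclude via sqrt
  have hnn : (0:ℝ) ≤ 1.65 * Real.exp (t^2/8) := by positivity
  have hsq : (1.65 * Real.exp (t^2/8))^2 = 2.7225 * Real.exp (t^2/4) := by
    have h1 : (1.65 * Real.exp (t^2/8))^2
        = 1.65^2 * (Real.exp (t^2/8) * Real.exp (t^2/8)) := by ring
    rw [h1, ← Real.exp_add, show t^2/8 + t^2/8 = t^2/4 by ring]
    norm_num
  calc Real.sqrt (G (2*t) + 1) ≤ Real.sqrt ((1.65 * Real.exp (t^2/8))^2) :=
        Real.sqrt_le_sqrt (by rw [hsq]; exact key)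
    _ = 1.65 * Real.exp (t^2/8) := Real.sqrt_sq hnn
end

section
/- Any bounded complex random variable Z is almost surely contained in some closed disk of radius (1/√3)·diam Z. -/
open MeasureTheory

/-- The diameter of (the support of) a complex random variable:
`inf { c : P(|Z₁ - Z₂| > c) = 0 }` for independent copies `Z₁, Z₂`. -/
noncomputable def probDiam {Ω : Type*} [MeasurableSpace Ω] (μ : Measure Ω)
    (Z : Ω → ℂ) : ℝ :=
  sInf {c : ℝ | (μ.prod μ) {p | c < ‖Z p.1 - Z p.2‖} = 0}

open Finset Metric in
lemma sum_identity (t : Finset ℂ) (w : ℂ → ℝ) (v : ℂ → ℂ) :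
    ∑ i ∈ t, ∑ j ∈ t, w i * w j * ‖v i - v j‖^2
      = 2*(∑ i ∈ t, w i)*(∑ i ∈ t, w i * ‖v i‖^2) - 2*‖∑ i ∈ t, w i • v i‖^2 := by
  have h : ‖∑ i ∈ t, w i • v i‖^2 = ∑ i ∈ t, ∑ j ∈ t, w i * w j * (inner ℝ (v i) (v j) : ℝ) := by
    rw [← real_inner_self_eq_norm_sq, sum_inner]
    refine Finset.sum_congr rfl fun i _ => ?_
    rw [real_inner_smul_left, inner_sum, Finset.mul_sum]
    refine Finset.sum_congr rfl fun j _ => ?_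
    rw [real_inner_smul_right]; ring
  rw [h]
  have key : ∀ i ∈ t, ∑ j ∈ t, w i * w j * ‖v i - v j‖^2
      = (w i * ‖v i‖^2) * (∑ j ∈ t, w j) + w i * (∑ j ∈ t, w j * ‖v j‖^2)
        - 2 * ∑ j ∈ t, w i * w j * (inner ℝ (v i) (v j) : ℝ) := by
    intro i _
    rw [Finset.mul_sum, Finset.mul_sum, Finset.mul_sum,
      ← Finset.sum_add_distrib, ← Finset.sum_sub_distrib]
    refine Finset.sum_congr rfl fun j _ => ?_
    rw [norm_sub_sq_real]; ring
  rw [Finset.sum_congr rfl key, Finset.sum_sub_distrib, Finset.sum_add_distrib,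
    ← Finset.sum_mul, ← Finset.sum_mul, ← Finset.mul_sum]
  ring

open Finset Metric in
lemma jung_plane_s16 {S : Set ℂ} (hS : IsCompact S) (hne : S.Nonempty) {d : ℝ} (hd0 : 0 ≤ d)
    (hdiam : ∀ z ∈ S, ∀ w ∈ S, ‖z - w‖ ≤ d) :
    ∃ a : ℂ, ∀ z ∈ S, ‖z - a‖ ≤ (1 / Real.sqrt 3) * d := by
  set r := (1 / Real.sqrt 3) * d with hr_def
  have hr0 : 0 ≤ r := by positivity
  have hr2 : r ^ 2 = d ^ 2 / 3 := by
    rw [hr_def, mul_pow, div_pow, one_pow, Real.sq_sqrt (by norm_num : (3:ℝ) ≥ 0)]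
    ring
  clear_value r
  -- the "farthest distance" function
  set f : ℂ → ℝ := fun a => sSup ((fun z => ‖z - a‖) '' S) with hf_def
  have hcont : ∀ a : ℂ, Continuous fun z : ℂ => ‖z - a‖ := fun a =>
    (continuous_id.sub continuous_const).norm
  have hle : ∀ a : ℂ, ∀ z ∈ S, ‖z - a‖ ≤ f a := by
    intro a z hz
    exact le_csSup ((hS.image (hcont a)).bddAbove) ⟨z, hz, rfl⟩
  have hmem : ∀ a : ℂ, ∃ z ∈ S, ‖z - a‖ = f a := by
    intro a
    have := (hS.image (hcont a)).sSup_mem (hne.image _)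
    obtain ⟨z, hz, hz'⟩ := this
    exact ⟨z, hz, hz'⟩
  obtain ⟨z₀, hz₀⟩ := hne
  have hf0 : 0 ≤ f z₀ := le_trans (by simp) (hle z₀ z₀ hz₀)
  have hkey : ∀ a b : ℂ, f a ≤ f b + ‖a - b‖ := by
    intro a b
    obtain ⟨z, hz, hz'⟩ := hmem a
    have h1 : ‖z - a‖ ≤ ‖z - b‖ + ‖b - a‖ := by
      have := norm_sub_le (z - b) (a - b)
      have h2 : z - b - (a - b) = z - a := by ring
      rw [h2] at this
      linarith [norm_sub_rev a b]
    rw [← norm_sub_rev a b] at h1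
    linarith [hle b z hz, hz']
  have hlip : Continuous f := by
    have : LipschitzWith 1 f := by
      refine LipschitzWith.of_dist_le_mul fun a b => ?_
      rw [NNReal.coe_one, one_mul, Real.dist_eq, abs_le, dist_eq_norm]
      constructor
      · linarith [hkey b a, norm_sub_rev a b]
      · linarith [hkey a b]
    exact this.continuous
  clear_value f
  obtain ⟨a, haK, hamin⟩ := (isCompact_closedBall z₀ (f z₀)).exists_isMinOn
    ⟨z₀, mem_closedBall_self hf0⟩ hlip.continuousOn
  have hglob : ∀ b : ℂ, f a ≤ f b := by
    intro b
    by_cases hb : b ∈ closedBall z₀ (f z₀)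
    · exact hamin hb
    · have h1 : f z₀ < dist b z₀ := by simpa [closedBall] using hb
      have h2 : f a ≤ f z₀ := hamin (mem_closedBall_self hf0)
      have h3 : ‖z₀ - b‖ ≤ f b := hle b z₀ hz₀
      rw [dist_comm, dist_eq_norm] at h1
      linarith
  set R := f a with hR_def
  have hR0 : 0 ≤ R := le_trans (norm_nonneg _) (hle a z₀ hz₀)
  have hleR : ∀ z ∈ S, ‖z - a‖ ≤ R := fun z hz => hR_def ▸ hle a z hz
  have hmemR : ∃ z ∈ S, ‖z - a‖ = R := by
    obtain ⟨z, hz, hz'⟩ := hmem a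
    exact ⟨z, hz, hz'.trans hR_def.symm⟩
  clear_value R
  suffices hRr : R ≤ r by
    exact ⟨a, fun z hz => le_trans (hleR z hz) hRr⟩
  by_contra hcon
  push_neg at hcon   -- r < R
  have hRpos : 0 < R := lt_of_le_of_lt hr0 hcon
  set T : Set ℂ := S ∩ {z | ‖z - a‖ = R} with hT_def
  have hTsub : T ⊆ S := Set.inter_subset_left
  have hTne : T.Nonempty := by
    obtain ⟨z, hz, hz'⟩ := hmemR
    exact ⟨z, hz, hz'⟩
  have hTcl : IsClosed T :=
    hS.isClosed.inter (isClosed_singleton.preimage (hcont a))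
  have hTcomp : IsCompact T := hS.of_isClosed_subset hTcl hTsub
  have hTR : ∀ z ∈ T, ‖z - a‖ = R := fun z hz => hz.2
  have hTmem : ∀ z ∈ S, ‖z - a‖ = R → z ∈ T := fun z hz h => ⟨hz, h⟩
  clear_value T
  -- Step A : a belongs to the closure of the convex hull of T
  have hA : a ∈ closure (convexHull ℝ T) := by
    by_contra hc
    obtain ⟨φ, u, hfa, hfb⟩ := geometric_hahn_banach_point_closed
      ((convex_convexHull ℝ T).closure) isClosed_closure hc
    set w : ℂ := (InnerProductSpace.toDual ℝ ℂ).symm φ with hw_def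
    have hw : ∀ z : ℂ, (inner ℝ w z : ℝ) = φ z := fun z =>
      InnerProductSpace.toDual_symm_apply
    set δ : ℝ := u - φ a with hδ_def
    have hδ0 : 0 < δ := by simp [hδ_def]; linarith
    have hTw : ∀ z ∈ T, δ ≤ (inner ℝ w (z - a) : ℝ) := by
      intro z hz
      have h1 : u < φ z := hfb z (subset_closure (subset_convexHull ℝ T hz))
      rw [hw, map_sub]
      simp only [hδ_def]; linarith
    clear_value w δ
    have hwne : w ≠ 0 := by
      intro h0
      obtain ⟨z1, hz1⟩ := hTne
      have := hTw z1 hz1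
      rw [h0] at this
      simp at this
      linarith
    have hwpos : 0 < ‖w‖ := norm_pos_iff.2 hwne
    -- near-farthest points have inner product at least δ/2
    obtain ⟨ε, hε0, hεprop⟩ :
        ∃ ε > 0, ∀ z ∈ S, (inner ℝ w (z - a) : ℝ) ≤ δ/2 → ‖z - a‖ ≤ R - ε := by
      set T' : Set ℂ := S ∩ {z | (inner ℝ w (z - a) : ℝ) ≤ δ/2} with hT'_def
      have hT'cl : IsClosed T' := hS.isClosed.inter
        (isClosed_le (continuous_const.inner (continuous_id.sub continuous_const)) continuous_const)
      have hT'comp : IsCompact T' := hS.of_isClosed_subset hT'cl Set.inter_subset_left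
      rcases T'.eq_empty_or_nonempty with hT'e | hT'ne
      · refine ⟨1, one_pos, fun z hz hzw => absurd ?_ (Set.notMem_empty z)⟩
        rw [← hT'e]; exact ⟨hz, hzw⟩
      · obtain ⟨z', hz', hz'max⟩ := hT'comp.exists_isMaxOn hT'ne (hcont a).continuousOn
        have hz'S : z' ∈ S := hz'.1
        have hz'R : ‖z' - a‖ < R := by
          rcases lt_or_eq_of_le (hleR z' hz'S) with h | h
          · exact h
          · exfalso
            have : δ ≤ (inner ℝ w (z' - a) : ℝ) := hTw z' (hTmem z' hz'S h)
            have := hz'.2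
            simp only [Set.mem_setOf_eq] at this
            linarith
        refine ⟨R - ‖z' - a‖, by linarith, fun z hz hzw => ?_⟩
        have : ‖z - a‖ ≤ ‖z' - a‖ := hz'max ⟨hz, hzw⟩
        linarith
    -- move the center towards w
    set t : ℝ := min (ε / (2*‖w‖)) (δ / (2*‖w‖^2)) with ht_def
    have ht0 : 0 < t := lt_min (by positivity) (by positivity)
    have htw1 : t * ‖w‖ ≤ ε / 2 := by
      have h1 : t ≤ ε / (2*‖w‖) := min_le_left _ _
      have h2 : t * ‖w‖ ≤ ε / (2*‖w‖) * ‖w‖ :=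
        mul_le_mul_of_nonneg_right h1 (norm_nonneg w)
      have h3 : ε / (2*‖w‖) * ‖w‖ = ε / 2 := by
        rw [div_mul_eq_mul_div, mul_div_mul_right _ _ (ne_of_gt hwpos)]
      linarith
    have htw2 : t * ‖w‖^2 ≤ δ / 2 := by
      have h1 : t ≤ δ / (2*‖w‖^2) := min_le_right _ _
      have h2 : t * ‖w‖^2 ≤ δ / (2*‖w‖^2) * ‖w‖^2 :=
        mul_le_mul_of_nonneg_right h1 (sq_nonneg _)
      have h3 : δ / (2*‖w‖^2) * ‖w‖^2 = δ / 2 := by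
        rw [div_mul_eq_mul_div, mul_div_mul_right _ _ (ne_of_gt (by positivity : (0:ℝ) < ‖w‖^2))]
      linarith
    clear_value t
    set b : ℂ := a + t • w with hb_def
    clear_value b
    have hfb_lt : f b < R := by
      obtain ⟨z1, hz1, hz1'⟩ := hmem b
      rw [← hz1']
      by_cases h1 : (inner ℝ w (z1 - a) : ℝ) ≤ δ/2
      · have h2 : ‖z1 - a‖ ≤ R - ε := hεprop z1 hz1 h1
        have h3 : ‖z1 - b‖ ≤ ‖z1 - a‖ + t * ‖w‖ := by
          have : z1 - b = (z1 - a) - t • w := by rw [hb_def]; ring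
          rw [this]
          calc ‖z1 - a - t • w‖ ≤ ‖z1 - a‖ + ‖t • w‖ := norm_sub_le _ _
            _ = ‖z1 - a‖ + t * ‖w‖ := by
              rw [norm_smul, Real.norm_eq_abs, abs_of_pos ht0]
        linarith
      · push_neg at h1
        have hsq : ‖z1 - b‖^2 < R^2 := by
          have he : z1 - b = (z1 - a) - t • w := by rw [hb_def]; ring
          rw [he, norm_sub_sq_real]
          have h2 : (inner ℝ (z1 - a) (t • w) : ℝ) = t * (inner ℝ w (z1 - a) : ℝ) := by
            rw [real_inner_smul_right, real_inner_comm]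
          have h3 : ‖t • w‖^2 = t^2 * ‖w‖^2 := by
            rw [norm_smul, Real.norm_eq_abs, abs_of_pos ht0, mul_pow]
          rw [h2, h3]
          have h4 : ‖z1 - a‖ ≤ R := hleR z1 hz1
          have h5 : ‖z1 - a‖^2 ≤ R^2 := by nlinarith [norm_nonneg (z1 - a)]
          nlinarith
        exact lt_of_pow_lt_pow_left₀ 2 hR0 hsq
    exact absurd (hglob b) (by linarith)
  -- Step B : extract a convex combination and derive a contradiction
  set δ' : ℝ := (R - r) / 2 with hδ'_def
  have hδ'0 : 0 < δ' := by rw [hδ'_def]; linarith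
  have hδ'R : δ' ≤ R := by rw [hδ'_def]; linarith
  obtain ⟨a', ha'hull, ha'close⟩ : ∃ a' ∈ convexHull ℝ T, dist a a' < δ' := by
    rw [Metric.mem_closure_iff] at hA
    exact hA δ' hδ'0
  clear_value δ'
  rw [convexHull_eq_union] at ha'hull
  simp only [Set.mem_iUnion] at ha'hull
  obtain ⟨tf, hts, hai, ha't⟩ := ha'hull
  have htne : tf.Nonempty := by
    by_contra h
    rw [Finset.not_nonempty_iff_eq_empty] at h
    rw [h] at ha't
    simp at ha't
  have hcard3 : (tf.card : ℝ) ≤ 3 := by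
    have h1 := hai.card_le_finrank_succ
    have h2 : Module.finrank ℝ ↥(vectorSpan ℝ (Set.range (Subtype.val : tf → ℂ)))
        ≤ Module.finrank ℝ ℂ := Submodule.finrank_le _
    rw [Complex.finrank_real_complex] at h2
    have h3 : Fintype.card tf = tf.card := Fintype.card_coe tf
    exact_mod_cast (h3 ▸ h1).trans (by omega)
  rw [Finset.convexHull_eq] at ha't
  obtain ⟨W, hW0, hW1, hWc⟩ := ha't
  rw [Finset.centerMass_eq_of_sum_1 _ _ hW1] at hWc
  simp only [id] at hWc
  -- the weighted combination of points of tf equals a'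
  have hzero : ∑ z ∈ tf, W z • (z - a') = 0 := by
    have : ∑ z ∈ tf, W z • (z - a') = (∑ z ∈ tf, W z • z) - (∑ z ∈ tf, W z) • a' := by
      rw [Finset.sum_smul, ← Finset.sum_sub_distrib]
      exact Finset.sum_congr rfl fun z _ => by rw [smul_sub]
    rw [this, hWc, hW1, one_smul, sub_self]
  have hid := sum_identity tf W (fun z => z - a')
  simp only [sub_sub_sub_cancel_right] at hid
  rw [hzero, hW1] at hid
  simp only [norm_zero] at hid
  -- lower bound
  have hlow : ∀ z ∈ tf, R - δ' ≤ ‖z - a'‖ := by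
    intro z hz
    have hzT : z ∈ T := hts hz
    have h1 : ‖z - a‖ = R := hTR z hzT
    have h2 : ‖z - a‖ ≤ ‖z - a'‖ + ‖a' - a‖ := by
      calc ‖z - a‖ = ‖(z - a') + (a' - a)‖ := by ring_nf
        _ ≤ ‖z - a'‖ + ‖a' - a‖ := norm_add_le _ _
    have h3 : ‖a' - a‖ ≤ δ' := by
      rw [← dist_eq_norm, dist_comm]
      exact le_of_lt ha'close
    linarith
  have hlow2 : (R - δ')^2 ≤ ∑ z ∈ tf, W z * ‖z - a'‖^2 := by
    calc (R - δ')^2 = ∑ z ∈ tf, W z * (R - δ')^2 := by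
          rw [← Finset.sum_mul, hW1, one_mul]
      _ ≤ ∑ z ∈ tf, W z * ‖z - a'‖^2 := by
          refine Finset.sum_le_sum fun z hz => mul_le_mul_of_nonneg_left ?_ (hW0 z hz)
          have := hlow z hz
          have h0 : 0 ≤ R - δ' := by linarith
          nlinarith
  -- upper bound
  have hup : ∑ i ∈ tf, ∑ j ∈ tf, W i * W j * ‖i - j‖^2
      ≤ d^2 * (1 - ∑ i ∈ tf, W i^2) := by
    have hterm : ∀ i ∈ tf, ∀ j ∈ tf, W i * W j * ‖i - j‖^2
        ≤ W i * W j * d^2 - (if i = j then W i * W j * d^2 else 0) := by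
      intro i hi j hj
      by_cases h : i = j
      · simp [h]
      · simp only [h, if_false, sub_zero]
        refine mul_le_mul_of_nonneg_left ?_ (mul_nonneg (hW0 i hi) (hW0 j hj))
        exact pow_le_pow_left₀ (norm_nonneg _) (hdiam i (hTsub (hts hi)) j (hTsub (hts hj))) 2
    calc ∑ i ∈ tf, ∑ j ∈ tf, W i * W j * ‖i - j‖^2
        ≤ ∑ i ∈ tf, ∑ j ∈ tf, (W i * W j * d^2 - (if i = j then W i * W j * d^2 else 0)) := by
          refine Finset.sum_le_sum fun i hi => Finset.sum_le_sum fun j hj => hterm i hi j hj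
      _ = d^2 * (1 - ∑ i ∈ tf, W i^2) := by
          simp only [Finset.sum_sub_distrib]
          have e1 : ∑ i ∈ tf, ∑ j ∈ tf, W i * W j * d^2 = d^2 := by
            have e0 : ∀ i ∈ tf, ∑ j ∈ tf, W i * W j * d^2 = W i * d^2 := by
              intro i _
              have : ∑ j ∈ tf, W i * W j * d^2 = W i * d^2 * ∑ j ∈ tf, W j := by
                rw [Finset.mul_sum]
                exact Finset.sum_congr rfl fun j _ => by ring
              rw [this, hW1, mul_one]
            rw [Finset.sum_congr rfl e0, ← Finset.sum_mul, hW1, one_mul]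
          have e2 : ∀ i ∈ tf, ∑ j ∈ tf, (if i = j then W i * W j * d^2 else 0)
              = W i^2 * d^2 := by
            intro i hi
            rw [Finset.sum_ite_eq tf i (fun j => W i * W j * d^2), if_pos hi]
            ring
          rw [e1, Finset.sum_congr rfl e2, ← Finset.sum_mul]
          ring
  -- Cauchy-Schwarz : sum of squares of weights at least 1/3
  have hcs : (1:ℝ) ≤ 3 * ∑ i ∈ tf, W i^2 := by
    have h1 : (∑ i ∈ tf, W i)^2 ≤ tf.card * ∑ i ∈ tf, W i^2 := sq_sum_le_card_mul_sum_sq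
    rw [hW1, one_pow] at h1
    have h2 : (0:ℝ) ≤ ∑ i ∈ tf, W i^2 := Finset.sum_nonneg fun i _ => sq_nonneg _
    have h3 : (tf.card : ℝ) * ∑ i ∈ tf, W i^2 ≤ 3 * ∑ i ∈ tf, W i^2 :=
      mul_le_mul_of_nonneg_right hcard3 h2
    linarith
  -- combine
  have hid2 : ∑ i ∈ tf, ∑ j ∈ tf, W i * W j * ‖i - j‖^2
      = 2 * ∑ z ∈ tf, W z * ‖z - a'‖^2 := by rw [hid]; norm_num
  have h6 : (1:ℝ) - ∑ i ∈ tf, W i^2 ≤ 2/3 := by linarith only [hcs]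
  have h7 : d^2 * (1 - ∑ i ∈ tf, W i^2) ≤ d^2 * (2/3) :=
    mul_le_mul_of_nonneg_left h6 (sq_nonneg d)
  have hfinal : (R - δ')^2 ≤ d^2 / 3 := by linarith only [hid2, hup, hlow2, h7]
  have hgt : r < R - δ' := by rw [hδ'_def]; linarith only [hcon]
  have hlt : r^2 < (R - δ')^2 := by
    rw [pow_two, pow_two]
    exact mul_self_lt_mul_self hr0 hgt
  rw [hr2] at hlt
  linarith only [hfinal, hlt]

theorem confined_to_disk {Ω : Type*} [MeasurableSpace Ω] (μ : Measure Ω)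
    [IsProbabilityMeasure μ] (Z : Ω → ℂ) (hm : Measurable Z)
    (C : ℝ) (hbdd : ∀ᵐ ω ∂μ, ‖Z ω‖ ≤ C) :
    ∃ a : ℂ, ∀ᵐ ω ∂μ, ‖Z ω - a‖ ≤ (1 / Real.sqrt 3) * probDiam μ Z := by
  classical
  set D := {c : ℝ | (μ.prod μ) {p : Ω × Ω | c < ‖Z p.1 - Z p.2‖} = 0} with hD_def
  have hDpos : ∀ c ∈ D, 0 ≤ c := by
    intro c hc
    by_contra h
    push_neg at h
    have huniv : {p : Ω × Ω | c < ‖Z p.1 - Z p.2‖} = Set.univ :=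
      Set.eq_univ_of_forall fun p => lt_of_lt_of_le h (norm_nonneg _)
    rw [hD_def, Set.mem_setOf_eq, huniv, measure_univ] at hc
    exact one_ne_zero hc
  have hd0 : 0 ≤ probDiam μ Z := Real.sInf_nonneg hDpos
  set d := probDiam μ Z with hd_def
  set ν := μ.map Z with hν_def
  have hν : IsProbabilityMeasure ν := Measure.isProbabilityMeasure_map hm.aemeasurable
  set C' := max C 0 with hC'_def
  have hbdd' : ∀ᵐ ω ∂μ, ‖Z ω‖ ≤ C' := hbdd.mono fun ω h => le_trans h (le_max_left _ _)
  have hμC : μ {ω | C' < ‖Z ω‖} = 0 := by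
    rw [ae_iff] at hbdd'
    convert hbdd' using 2
    ext ω; simp [not_le]
  -- the defining set is nonempty and bounded below
  have hDne : (2*C') ∈ D := by
    rw [hD_def, Set.mem_setOf_eq]
    have hsub : {p : Ω × Ω | 2*C' < ‖Z p.1 - Z p.2‖}
        ⊆ {p : Ω × Ω | C' < ‖Z p.1‖} ∪ {p : Ω × Ω | C' < ‖Z p.2‖} := by
      intro p hp
      simp only [Set.mem_setOf_eq] at hp ⊢
      by_contra h
      have := norm_sub_le (Z p.1) (Z p.2)
      rw [Set.mem_union] at h
      push_neg at h
      simp only [Set.mem_setOf_eq, not_lt] at h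
      linarith [h.1, h.2]
    refine measure_mono_null hsub (measure_union_null ?_ ?_)
    · have : {p : Ω × Ω | C' < ‖Z p.1‖} = {ω | C' < ‖Z ω‖} ×ˢ Set.univ := by
        ext p; simp
      rw [this, MeasureTheory.Measure.prod_prod, hμC, zero_mul]
    · have : {p : Ω × Ω | C' < ‖Z p.2‖} = Set.univ ×ˢ {ω | C' < ‖Z ω‖} := by
        ext p; simp
      rw [this, MeasureTheory.Measure.prod_prod, hμC, mul_zero]
  have hDbdd : BddBelow D := ⟨0, hDpos⟩
  -- the diameter bound holds almost surely for pairs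
  have hd_ae : (μ.prod μ) {p : Ω × Ω | d < ‖Z p.1 - Z p.2‖} = 0 := by
    have hcover : {p : Ω × Ω | d < ‖Z p.1 - Z p.2‖}
        = ⋃ n : ℕ, {p : Ω × Ω | d + 1/(n+1) < ‖Z p.1 - Z p.2‖} := by
      ext p
      simp only [Set.mem_setOf_eq, Set.mem_iUnion]
      constructor
      · intro h
        obtain ⟨n, hn⟩ := exists_nat_one_div_lt (by linarith : (0:ℝ) < ‖Z p.1 - Z p.2‖ - d)
        exact ⟨n, by push_cast; push_cast at hn; linarith⟩
      · rintro ⟨n, hn⟩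
        have : (0:ℝ) < 1/(n+1) := by positivity
        linarith
    rw [hcover]
    refine measure_iUnion_null fun n => ?_
    have hlt : sInf D < d + 1/(n+1) := by
      have h1 : (0:ℝ) < 1/((n:ℝ)+1) := by positivity
      have hdD : d = sInf D := rfl
      rw [← hdD]; linarith
    obtain ⟨c, hcD, hc⟩ := (csInf_lt_iff hDbdd ⟨2*C', hDne⟩).mp hlt
    refine measure_mono_null ?_ hcD
    intro p hp
    simp only [Set.mem_setOf_eq] at hp ⊢
    linarith
  -- construct the essential support S
  set U : Set ℂ := {z : ℂ | ∃ ε > 0, ν (Metric.ball z ε) = 0} with hU_def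
  have hUopen : IsOpen U := by
    rw [Metric.isOpen_iff]
    rintro z ⟨ε, hε, h0⟩
    refine ⟨ε/2, by linarith, fun y hy => ?_⟩
    refine ⟨ε/2, by linarith, measure_mono_null (Metric.ball_subset_ball' ?_) h0⟩
    rw [Metric.mem_ball] at hy
    linarith
  have hUnull : ν U = 0 := by
    refine measure_null_of_locally_null U fun z hz => ?_
    obtain ⟨ε, hε, h0⟩ := hz
    exact ⟨Metric.ball z ε, mem_nhdsWithin_of_mem_nhds (Metric.ball_mem_nhds z hε), h0⟩
  set S : Set ℂ := Metric.closedBall 0 C' \ U with hS_def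
  have hSclosed : IsClosed S := Metric.isClosed_closedBall.sdiff hUopen
  have hScomp : IsCompact S :=
    (isCompact_closedBall 0 C').of_isClosed_subset hSclosed Set.diff_subset
  have hcb_null : ν (Metric.closedBall 0 C')ᶜ = 0 := by
    rw [hν_def, MeasureTheory.Measure.map_apply hm measurableSet_closedBall.compl]
    rw [ae_iff] at hbdd'
    refine measure_mono_null ?_ hbdd'
    intro ω hω
    simp only [Set.mem_preimage, Set.mem_compl_iff, Metric.mem_closedBall,
      dist_zero_right, not_le] at hω ⊢
    exact hω
  have hSc_null : ν Sᶜ = 0 := by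
    have : Sᶜ = (Metric.closedBall 0 C')ᶜ ∪ U := by
      rw [hS_def, Set.diff_eq, Set.compl_inter, compl_compl]
    rw [this]
    exact measure_union_null hcb_null hUnull
  have hSne : S.Nonempty := by
    rw [Set.nonempty_iff_ne_empty]
    intro h
    have : Sᶜ = Set.univ := by rw [h, Set.compl_empty]
    rw [this, measure_univ] at hSc_null
    exact one_ne_zero hSc_null
  -- diameter of S is at most d
  have hdiamS : ∀ z ∈ S, ∀ w ∈ S, ‖z - w‖ ≤ d := by
    intro z hz w hw
    by_contra h
    push_neg at h
    set ε := (‖z - w‖ - d)/2 with hε_def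
    have hε0 : 0 < ε := by rw [hε_def]; linarith
    have hzb : ν (Metric.ball z ε) ≠ 0 := fun h0 => hz.2 ⟨ε, hε0, h0⟩
    have hwb : ν (Metric.ball w ε) ≠ 0 := fun h0 => hw.2 ⟨ε, hε0, h0⟩
    have hmapz : ν (Metric.ball z ε) = μ (Z ⁻¹' Metric.ball z ε) :=
      MeasureTheory.Measure.map_apply hm measurableSet_ball
    have hmapw : ν (Metric.ball w ε) = μ (Z ⁻¹' Metric.ball w ε) :=
      MeasureTheory.Measure.map_apply hm measurableSet_ball
    have hsub : (Z ⁻¹' Metric.ball z ε) ×ˢ (Z ⁻¹' Metric.ball w ε)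
        ⊆ {p : Ω × Ω | d < ‖Z p.1 - Z p.2‖} := by
      rintro p ⟨h1, h2⟩
      simp only [Set.mem_preimage, Metric.mem_ball, dist_eq_norm] at h1 h2
      simp only [Set.mem_setOf_eq]
      have t1 : ‖z - w‖ ≤ ‖z - Z p.1‖ + ‖Z p.1 - Z p.2‖ + ‖Z p.2 - w‖ := by
        calc ‖z - w‖ = ‖(z - Z p.1) + (Z p.1 - Z p.2) + (Z p.2 - w)‖ := by ring_nf
          _ ≤ ‖(z - Z p.1) + (Z p.1 - Z p.2)‖ + ‖Z p.2 - w‖ := norm_add_le _ _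
          _ ≤ ‖z - Z p.1‖ + ‖Z p.1 - Z p.2‖ + ‖Z p.2 - w‖ := by
              linarith [norm_add_le (z - Z p.1) (Z p.1 - Z p.2)]
      rw [norm_sub_rev] at h1
      have := hε_def
      linarith
    have h0 : (μ.prod μ) ((Z ⁻¹' Metric.ball z ε) ×ˢ (Z ⁻¹' Metric.ball w ε)) = 0 :=
      measure_mono_null hsub hd_ae
    rw [MeasureTheory.Measure.prod_prod] at h0
    rcases mul_eq_zero.mp h0 with h' | h'
    · exact hzb (hmapz.trans h')
    · exact hwb (hmapw.trans h')
  -- apply Jung's theorem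
  obtain ⟨a, ha⟩ := jung_plane_s16 hScomp hSne hd0 hdiamS
  refine ⟨a, ?_⟩
  have hZS : ∀ᵐ ω ∂μ, Z ω ∈ S := by
    rw [ae_iff]
    have : {ω | ¬ Z ω ∈ S} = Z ⁻¹' Sᶜ := rfl
    rw [this, ← MeasureTheory.Measure.map_apply hm hSclosed.measurableSet.compl, ← hν_def]
    exact hSc_null
  filter_upwards [hZS] with ω hω
  exact ha (Z ω) hω
end

section
/- Every subset of the plane ℝ² with diameter at most d is contained in a closed disk of radius d/√3 (Jung's theorem in dimension 2). -/
set_option maxHeartbeats 1000000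

noncomputable def pt2 (x y : ℝ) : EuclideanSpace ℝ (Fin 2) :=
  (WithLp.equiv 2 (Fin 2 → ℝ)).symm ![x, y]

lemma pt2_zero (x y : ℝ) : pt2 x y 0 = x := rfl
lemma pt2_one (x y : ℝ) : pt2 x y 1 = y := rfl

lemma dist_sq2 (x y : EuclideanSpace ℝ (Fin 2)) :
    dist x y ^ 2 = (x 0 - y 0)^2 + (x 1 - y 1)^2 := by
  rw [EuclideanSpace.dist_eq, Real.sq_sqrt (by positivity)]
  simp [Fin.sum_univ_two, Real.dist_eq, sq_abs]

lemma dist_of_sq {x y : EuclideanSpace ℝ (Fin 2)} {r : ℝ} (hr : 0 ≤ r)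
    (h : dist x y ^ 2 ≤ r ^ 2) : dist x y ≤ r := by
  nlinarith [dist_nonneg (x := x) (y := y)]

theorem keymax (A B C D : ℝ) (hA : 0 ≤ A) (hB : 0 ≤ B)
    (hCd : C ≤ D)
    (h2 : B < A + C) (h3 : C < A + B)
    (hac : A ≤ C) (hbc : B ≤ C) :
    3*A*B*C ≤ D * (2*A*B + 2*B*C + 2*C*A - A^2 - B^2 - C^2) := by
  have hr : 0 < A + B - C := by linarith
  have hrA : A + B - C ≤ A := by linarith
  have hrB : A + B - C ≤ B := by linarith
  have hAB : (A + B - C)^2 ≤ A * B := by nlinarith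
  have hE : 0 < 2*A*B + 2*B*C + 2*C*A - A^2 - B^2 - C^2 := by nlinarith
  have hC : 0 ≤ C := le_trans hr.le (by linarith)
  have step : 3*A*B*C ≤ C * (2*A*B + 2*B*C + 2*C*A - A^2 - B^2 - C^2) := by nlinarith
  calc 3*A*B*C ≤ C * (2*A*B + 2*B*C + 2*C*A - A^2 - B^2 - C^2) := step
    _ ≤ D * (2*A*B + 2*B*C + 2*C*A - A^2 - B^2 - C^2) := by nlinarith

theorem key (A B C D : ℝ) (hA : 0 ≤ A) (hB : 0 ≤ B) (hC : 0 ≤ C)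
    (hAd : A ≤ D) (hBd : B ≤ D) (hCd : C ≤ D)
    (h1 : A < B + C) (h2 : B < A + C) (h3 : C < A + B) :
    3*A*B*C ≤ D * (2*A*B + 2*B*C + 2*C*A - A^2 - B^2 - C^2) := by
  rcases le_total A B with hab | hab <;> rcases le_total B C with hbc | hbc <;>
    rcases le_total A C with hac | hac
  · nlinarith [keymax A B C D hA hB hCd h2 h3 hac hbc]
  · nlinarith [keymax C A B D hC hA hBd (by linarith) (by linarith) (by linarith) (by linarith)]
  · nlinarith [keymax A C B D hA hC hBd (by linarith) (by linarith) (by linarith) (by linarith)]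
  · nlinarith [keymax C A B D hC hA hBd (by linarith) (by linarith) (by linarith) (by linarith)]
  · nlinarith [keymax B A C D hB hA hCd (by linarith) (by linarith) (by linarith) (by linarith)]
  · nlinarith [keymax B C A D hB hC hAd (by linarith) (by linarith) (by linarith) (by linarith)]
  · nlinarith [keymax B C A D hB hC hAd (by linarith) (by linarith) (by linarith) (by linarith)]
  · nlinarith [keymax B C A D hB hC hAd (by linarith) (by linarith) (by linarith) (by linarith)]

theorem three_point (a b c : EuclideanSpace ℝ (Fin 2)) {d : ℝ}
    (hab : dist a b ≤ d) (hac : dist a c ≤ d) (hbc : dist b c ≤ d) :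
    ∃ p : EuclideanSpace ℝ (Fin 2),
      dist p a ≤ d / Real.sqrt 3 ∧ dist p b ≤ d / Real.sqrt 3 ∧ dist p c ≤ d / Real.sqrt 3 := by
  have hd : 0 ≤ d := le_trans dist_nonneg hab
  have hr : 0 ≤ d / Real.sqrt 3 := by positivity
  have hr2 : (d / Real.sqrt 3) ^ 2 = d ^ 2 / 3 := by
    rw [div_pow, Real.sq_sqrt (by norm_num : (0:ℝ) ≤ 3)]
  have hab2 : (a 0 - b 0)^2 + (a 1 - b 1)^2 ≤ d^2 := by
    rw [← dist_sq2]; exact pow_le_pow_left₀ dist_nonneg hab 2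
  have hac2 : (a 0 - c 0)^2 + (a 1 - c 1)^2 ≤ d^2 := by
    rw [← dist_sq2]; exact pow_le_pow_left₀ dist_nonneg hac 2
  have hbc2 : (b 0 - c 0)^2 + (b 1 - c 1)^2 ≤ d^2 := by
    rw [← dist_sq2]; exact pow_le_pow_left₀ dist_nonneg hbc 2
  by_cases h3 : (b 0 - c 0)^2 + (b 1 - c 1)^2 + ((a 0 - c 0)^2 + (a 1 - c 1)^2)
      ≤ (a 0 - b 0)^2 + (a 1 - b 1)^2
  · refine ⟨pt2 ((a 0 + b 0)/2) ((a 1 + b 1)/2), dist_of_sq hr ?_, dist_of_sq hr ?_,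
      dist_of_sq hr ?_⟩ <;> rw [hr2, dist_sq2, pt2_zero, pt2_one]
    · have e : ((a 0 + b 0)/2 - a 0)^2 + ((a 1 + b 1)/2 - a 1)^2
          = ((a 0 - b 0)^2 + (a 1 - b 1)^2)/4 := by ring
      rw [e]; linarith [sq_nonneg d]
    · have e : ((a 0 + b 0)/2 - b 0)^2 + ((a 1 + b 1)/2 - b 1)^2
          = ((a 0 - b 0)^2 + (a 1 - b 1)^2)/4 := by ring
      rw [e]; linarith [sq_nonneg d]
    · have e : ((a 0 + b 0)/2 - c 0)^2 + ((a 1 + b 1)/2 - c 1)^2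
          = (2*((b 0 - c 0)^2 + (b 1 - c 1)^2) + 2*((a 0 - c 0)^2 + (a 1 - c 1)^2)
            - ((a 0 - b 0)^2 + (a 1 - b 1)^2))/4 := by ring
      rw [e]; linarith [sq_nonneg d]
  by_cases h2 : (b 0 - c 0)^2 + (b 1 - c 1)^2 + ((a 0 - b 0)^2 + (a 1 - b 1)^2)
      ≤ (a 0 - c 0)^2 + (a 1 - c 1)^2
  · refine ⟨pt2 ((a 0 + c 0)/2) ((a 1 + c 1)/2), dist_of_sq hr ?_, dist_of_sq hr ?_,
      dist_of_sq hr ?_⟩ <;> rw [hr2, dist_sq2, pt2_zero, pt2_one]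
    · have e : ((a 0 + c 0)/2 - a 0)^2 + ((a 1 + c 1)/2 - a 1)^2
          = ((a 0 - c 0)^2 + (a 1 - c 1)^2)/4 := by ring
      rw [e]; linarith [sq_nonneg d]
    · have e : ((a 0 + c 0)/2 - b 0)^2 + ((a 1 + c 1)/2 - b 1)^2
          = (2*((b 0 - c 0)^2 + (b 1 - c 1)^2) + 2*((a 0 - b 0)^2 + (a 1 - b 1)^2)
            - ((a 0 - c 0)^2 + (a 1 - c 1)^2))/4 := by ring
      rw [e]; linarith [sq_nonneg d]
    · have e : ((a 0 + c 0)/2 - c 0)^2 + ((a 1 + c 1)/2 - c 1)^2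
          = ((a 0 - c 0)^2 + (a 1 - c 1)^2)/4 := by ring
      rw [e]; linarith [sq_nonneg d]
  by_cases h1 : (a 0 - c 0)^2 + (a 1 - c 1)^2 + ((a 0 - b 0)^2 + (a 1 - b 1)^2)
      ≤ (b 0 - c 0)^2 + (b 1 - c 1)^2
  · refine ⟨pt2 ((b 0 + c 0)/2) ((b 1 + c 1)/2), dist_of_sq hr ?_, dist_of_sq hr ?_,
      dist_of_sq hr ?_⟩ <;> rw [hr2, dist_sq2, pt2_zero, pt2_one]
    · have e : ((b 0 + c 0)/2 - a 0)^2 + ((b 1 + c 1)/2 - a 1)^2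
          = (2*((a 0 - c 0)^2 + (a 1 - c 1)^2) + 2*((a 0 - b 0)^2 + (a 1 - b 1)^2)
            - ((b 0 - c 0)^2 + (b 1 - c 1)^2))/4 := by ring
      rw [e]; linarith [sq_nonneg d]
    · have e : ((b 0 + c 0)/2 - b 0)^2 + ((b 1 + c 1)/2 - b 1)^2
          = ((b 0 - c 0)^2 + (b 1 - c 1)^2)/4 := by ring
      rw [e]; linarith [sq_nonneg d]
    · have e : ((b 0 + c 0)/2 - c 0)^2 + ((b 1 + c 1)/2 - c 1)^2
          = ((b 0 - c 0)^2 + (b 1 - c 1)^2)/4 := by ring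
      rw [e]; linarith [sq_nonneg d]
  -- acute case: circumcenter
  push_neg at h1 h2 h3
  set u0 := b 0 - a 0 with hu0
  set u1 := b 1 - a 1 with hu1
  set v0 := c 0 - a 0 with hv0
  set v1 := c 1 - a 1 with hv1
  set A := (b 0 - c 0)^2 + (b 1 - c 1)^2 with hA
  set B := (a 0 - c 0)^2 + (a 1 - c 1)^2 with hB
  set C := (a 0 - b 0)^2 + (a 1 - b 1)^2 with hC
  set D := 2*(u0*v1 - u1*v0) with hD
  have hDE : D^2 = 2*A*B + 2*B*C + 2*C*A - A^2 - B^2 - C^2 := by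
    rw [hD, hA, hB, hC, hu0, hu1, hv0, hv1]; ring
  have hp : 0 < B + C - A := by linarith
  have hq : 0 < A + C - B := by linarith
  have hrr : 0 < A + B - C := by linarith
  have hEpos : 0 < 2*A*B + 2*B*C + 2*C*A - A^2 - B^2 - C^2 := by
    nlinarith [mul_pos hp hq, mul_pos hp hrr, mul_pos hq hrr]
  have hD2 : 0 < D^2 := by rw [hDE]; exact hEpos
  have hDne : D ≠ 0 := by intro h; rw [h] at hD2; simp at hD2
  have hDne' : 2*((b 0 - a 0)*(c 1 - a 1) - (b 1 - a 1)*(c 0 - a 0)) ≠ 0 := by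
    rw [hD, hu0, hu1, hv0, hv1] at hDne; exact hDne
  have hkey : 3*(A*B*C) ≤ d^2 * (2*A*B + 2*B*C + 2*C*A - A^2 - B^2 - C^2) := by
    have := key A B C (d^2) (by positivity) (by positivity) (by positivity)
      hbc2 hac2 hab2 h1 h2 h3
    linarith
  have habc : 0 ≤ A*B*C := by positivity
  have hfinal : A*B*C/D^2 ≤ d^2/3 := by
    rw [div_le_div_iff₀ hD2 (by norm_num), hDE]; linarith
  refine ⟨pt2 (a 0 + (v1*C - u1*B)/D) (a 1 + (u0*B - v0*C)/D), dist_of_sq hr ?_,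
    dist_of_sq hr ?_, dist_of_sq hr ?_⟩ <;> rw [hr2, dist_sq2, pt2_zero, pt2_one]
  · have hval : (a 0 + (v1*C - u1*B)/D - a 0)^2 + (a 1 + (u0*B - v0*C)/D - a 1)^2
        = A*B*C / D^2 := by
      rw [hA, hB, hC, hD, hu0, hu1, hv0, hv1]
      rw [add_div' _ _ _ hDne', add_div' _ _ _ hDne', div_sub' hDne', div_sub' hDne', div_pow, div_pow, ← add_div]
      congr 1
      ring
    rw [hval]; exact hfinal
  · have hval : (a 0 + (v1*C - u1*B)/D - b 0)^2 + (a 1 + (u0*B - v0*C)/D - b 1)^2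
        = A*B*C / D^2 := by
      rw [hA, hB, hC, hD, hu0, hu1, hv0, hv1]
      rw [add_div' _ _ _ hDne', add_div' _ _ _ hDne', div_sub' hDne', div_sub' hDne', div_pow, div_pow, ← add_div]
      congr 1
      ring
    rw [hval]; exact hfinal
  · have hval : (a 0 + (v1*C - u1*B)/D - c 0)^2 + (a 1 + (u0*B - v0*C)/D - c 1)^2
        = A*B*C / D^2 := by
      rw [hA, hB, hC, hD, hu0, hu1, hv0, hv1]
      rw [add_div' _ _ _ hDne', add_div' _ _ _ hDne', div_sub' hDne', div_sub' hDne', div_pow, div_pow, ← add_div]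
      congr 1
      ring
    rw [hval]; exact hfinal

theorem jung_plane (S : Set (EuclideanSpace ℝ (Fin 2))) (d : ℝ)
    (h : ∀ x ∈ S, ∀ y ∈ S, dist x y ≤ d) :
    ∃ c : EuclideanSpace ℝ (Fin 2), S ⊆ Metric.closedBall c (d / Real.sqrt 3) := by
  rcases S.eq_empty_or_nonempty with rfl | ⟨x0, hx0⟩
  · exact ⟨0, by simp⟩
  have hd : 0 ≤ d := by simpa using h x0 hx0 x0 hx0
  have hmain : (⋂ i : S, Metric.closedBall (i : EuclideanSpace ℝ (Fin 2))
      (d / Real.sqrt 3)).Nonempty := by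
    apply Convex.helly_theorem_compact' (𝕜 := ℝ)
      (fun _ => convex_closedBall _ _) (fun _ => isCompact_closedBall _ _)
    intro I hI
    classical
    have hI3 : I.card ≤ 3 := by
      simpa [finrank_euclideanSpace_fin] using hI
    rcases Finset.eq_empty_or_nonempty I with rfl | hne
    · simp
    have h1le : 1 ≤ I.card := Finset.card_pos.mpr hne
    have cover : ∀ (x y z : S), (∀ i ∈ I, i = x ∨ i = y ∨ i = z) →
        (⋂ i ∈ I, Metric.closedBall (i : EuclideanSpace ℝ (Fin 2))
          (d / Real.sqrt 3)).Nonempty := by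
      intro x y z hcov
      obtain ⟨p, h1, h2, h3⟩ := three_point (x : EuclideanSpace ℝ (Fin 2)) y z
        (h _ x.2 _ y.2) (h _ x.2 _ z.2) (h _ y.2 _ z.2)
      refine ⟨p, Set.mem_biInter fun i hi => ?_⟩
      rcases hcov i hi with rfl | rfl | rfl
      · exact Metric.mem_closedBall.mpr h1
      · exact Metric.mem_closedBall.mpr h2
      · exact Metric.mem_closedBall.mpr h3
    rcases (by omega : I.card = 1 ∨ I.card = 2 ∨ I.card = 3) with hc | hc | hc
    · obtain ⟨x, rfl⟩ := Finset.card_eq_one.mp hc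
      exact cover x x x (by simp)
    · obtain ⟨x, y, _, hIeq⟩ := Finset.card_eq_two.mp hc
      exact cover x y y (by intro i hi; rw [hIeq] at hi; simp at hi; tauto)
    · obtain ⟨x, y, z, _, _, _, hIeq⟩ := Finset.card_eq_three.mp hc
      exact cover x y z (by intro i hi; rw [hIeq] at hi; simp at hi; tauto)
  obtain ⟨p, hp⟩ := hmain
  refine ⟨p, fun x hx => ?_⟩
  have := Set.mem_iInter.mp hp ⟨x, hx⟩
  rw [Metric.mem_closedBall] at this ⊢
  rwa [dist_comm]
end
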